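/- arXiv:1612.07462 — 7 statements merged into one kernel-verified Lean document; each statement's English description precedes it below -/
import Mathlib

section
/- Let s be an even positive integer and n = 2s+2. If S is a 2-stable subset of [n] of cardinality s/2 + 1, then there exist a, a' in S with a - a' ∈ {s, s+1, s+2}. -/
/-- A subset `S` of `[n] = {1,…,n}` is `s`-stable if any two distinct elements
`i < j` of `S` satisfy `s ≤ j - i ≤ n - s`. -/
def IsStable (n s : ℕ) (S : Finset ℕ) : Prop :=
  ∀ i ∈ S, ∀ j ∈ S, i < j → s ≤ j - i ∧ j - i ≤ n - s

theorem two_stable_subset_has_close_pair (s : ℕ) (hs : 0 < s) (hse : Even s)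
    (S : Finset ℕ) (hSsub : S ⊆ Finset.Icc 1 (2 * s + 2))
    (hstab : IsStable (2 * s + 2) 2 S) (hcard : S.card = s / 2 + 1) :
    ∃ a ∈ S, ∃ a' ∈ S, a - a' = s ∨ a - a' = s + 1 ∨ a - a' = s + 2 := by
  by_contra hcon
  push_neg at hcon
  obtain ⟨t, ht⟩ := hse
  have hne : S.Nonempty := Finset.card_pos.mp (by omega)
  set m := S.min' hne with hm
  have hmS : m ∈ S := S.min'_mem hne
  have key : ∀ x ∈ S, ∀ y ∈ S, x < y →
      2 ≤ y - x ∧ y - x ≤ 2 * s ∧ y - x ≠ s ∧ y - x ≠ s + 1 ∧ y - x ≠ s + 2 := by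
    intro x hx y hy hxy
    obtain ⟨h1, h2⟩ := hstab x hx y hy hxy
    obtain ⟨c1, c2, c3⟩ := hcon y hy x hx
    exact ⟨h1, by omega, c1, c2, c3⟩
  have main : ∀ x ∈ S, ∀ y ∈ S, x < y →
      (if x - m < s then x - m else x - m - (s + 1)) / 2 ≠
      (if y - m < s then y - m else y - m - (s + 1)) / 2 := by
    intro x hx y hy hxy
    have hmx : m ≤ x := S.min'_le x hx
    have hmy : m ≤ y := S.min'_le y hy
    have kxy := key x hx y hy hxy
    have kx : x = m ∨ (2 ≤ x - m ∧ x - m ≤ 2 * s ∧ x - m ≠ s ∧ x - m ≠ s + 1 ∧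
        x - m ≠ s + 2) := by
      rcases eq_or_lt_of_le hmx with h | h
      · left; omega
      · right; exact key m hmS x hx h
    have ky := key m hmS y hy (by omega)
    split_ifs with h1 h2 h2 <;> omega
  have hmaps : ∀ x ∈ S,
      (if x - m < s then x - m else x - m - (s + 1)) / 2 ∈ Finset.range (s / 2) := by
    intro x hx
    have hmx : m ≤ x := S.min'_le x hx
    have kx : x = m ∨ (2 ≤ x - m ∧ x - m ≤ 2 * s ∧ x - m ≠ s ∧ x - m ≠ s + 1 ∧
        x - m ≠ s + 2) := by
      rcases eq_or_lt_of_le hmx with h | h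
      · left; omega
      · right; exact key m hmS x hx h
    rw [Finset.mem_range]
    split_ifs with h1 <;> omega
  have hinj : Set.InjOn (fun x => (if x - m < s then x - m else x - m - (s + 1)) / 2) S := by
    intro x hx y hy hxy
    by_contra hne'
    rcases lt_trichotomy x y with h | h | h
    · exact main x hx y hy h hxy
    · exact hne' h
    · exact main y hy x hx h hxy.symm
  have := Finset.card_le_card_of_injOn _ hmaps hinj
  rw [Finset.card_range, hcard] at this
  omega
end

section
/- Let k, n be positive integers and s an even positive integer with n ≥ (s+2)k - 2. If S is a 2-stable subset of [n] of cardinality (s/2)(k-1) + 1, then S contains an s-stable subset of cardinality k. -/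
/-- Core selection lemma: given a strictly increasing "lifted point" function `p`
with period `m` (adding `n` per period), gaps at least 2, one can select
`K+1` cut points with consecutive `p`-distances at least `s` and with the
wrap-around distance also at least `s`. -/
lemma exists_selection (m n s t K : ℕ) (p : ℕ → ℕ)
    (ht : 1 ≤ t) (hK : 1 ≤ K) (hs : s = 2 * t) (hm : m = t * K + 1)
    (hn : (s + 2) * (K + 1) ≤ n + 2)
    (hstep : ∀ x, p x + 2 ≤ p (x + 1))
    (hper : ∀ x, p (x + m) = p x + n) :
    ∃ J : ℕ → ℕ, (∀ r, p (J r) + s ≤ p (J (r + 1))) ∧ p (J K) + s ≤ p (J 0 + m) := by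
  set tK := t * K with htK
  have hm0 : 0 < m := by omega
  have hs2 : 2 ≤ s := by omega
  have pstep_t : ∀ x, p x + 2 * t ≤ p (x + t) := by
    intro x
    have H : ∀ c, p x + 2 * c ≤ p (x + c) := by
      intro c; induction c with
      | zero => simp
      | succ c ih =>
        have h1 := hstep (x + c)
        have e : x + (c + 1) = x + c + 1 := by omega
        rw [e]; omega
    exact H t
  have pmono : Monotone p := monotone_nat_of_le_succ fun x => by have := hstep x; omega
  have pstrict : StrictMono p := strictMono_nat_of_lt_succ fun x => by have := hstep x; omega
  set G : ℕ → ℕ := fun x => p (x + 1) - p x with hGdef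
  have hG : ∀ x, p (x + 1) = p x + G x := by
    intro x; have := hstep x; simp only [hGdef]; omega
  have hG2 : ∀ x, 2 ≤ G x := by intro x; have h1 := hstep x; have h2 := hG x; omega
  have hGadd : ∀ x, G (x + m) = G x := by
    intro x
    have h1 := hG (x + m)
    have h2 := hG x
    have h3 := hper x
    have h4 := hper (x + 1)
    have e : x + m + 1 = x + 1 + m := by omega
    rw [e] at h1
    omega
  have hGmul : ∀ c x, G (x + c * m) = G x := by
    intro c; induction c with
    | zero => simp
    | succ c ih =>
      intro x
      have e : x + (c + 1) * m = x + c * m + m := by ring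
      rw [e, hGadd, ih]
  have hGmod : ∀ x, G x = G (x % m) := by
    intro x
    conv_lhs => rw [← Nat.mod_add_div' x m]
    rw [hGmul]
  by_cases hbig : ∃ i, i < m ∧ s ≤ G i
  · obtain ⟨i, him, hgi⟩ := hbig
    refine ⟨fun r => (i + 1) % m + t * r, fun r => ?_, ?_⟩
    · show p ((i + 1) % m + t * r) + s ≤ p ((i + 1) % m + t * (r + 1))
      have e : (i + 1) % m + t * (r + 1) = (i + 1) % m + t * r + t := by ring
      rw [e, hs]; exact pstep_t _
    · have hmod : ((i + 1) % m + t * K) % m = i := by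
        by_cases hi1 : i + 1 < m
        · have hj0' : (i + 1) % m = i + 1 := Nat.mod_eq_of_lt hi1
          have e : (i + 1) % m + t * K = i + m := by rw [hj0', hm, htK]; ring
          rw [e, Nat.add_mod_right]; exact Nat.mod_eq_of_lt him
        · have hi2 : i + 1 = m := by omega
          have hj0' : (i + 1) % m = 0 := by rw [hi2, Nat.mod_self]
          have e : t * K = i := by rw [← htK]; omega
          rw [hj0', zero_add, e]; exact Nat.mod_eq_of_lt him
      have e2 : (i + 1) % m + m = (i + 1) % m + t * K + 1 := by rw [hm, htK]; ring
      have e0 : (i + 1) % m + t * 0 = (i + 1) % m := by ring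
      show p ((i + 1) % m + t * K) + s ≤ p ((i + 1) % m + t * 0 + m)
      rw [e0, e2, hG ((i + 1) % m + t * K)]
      have e3 : G ((i + 1) % m + t * K) = G i := by
        rw [hGmod ((i + 1) % m + t * K), hmod]
      rw [e3]; omega
  · push_neg at hbig
    have hGlt : ∀ x, G x < s := fun x => by rw [hGmod x]; exact hbig _ (Nat.mod_lt _ hm0)
    have hns : s ≤ n := by
      have h1 : (s + 2) * 1 ≤ (s + 2) * (K + 1) := Nat.mul_le_mul_left _ (by omega)
      rw [mul_one] at h1
      linarith
    have hφex : ∀ x, ∃ j, p x + s ≤ p j := fun x => ⟨x + m, by rw [hper x]; omega⟩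
    set φ : ℕ → ℕ := fun x => Nat.find (hφex x) with hφdef
    have hφ : ∀ x, p x + s ≤ p (φ x) := fun x => Nat.find_spec (hφex x)
    have hφmin : ∀ x j, j < φ x → p j < p x + s := fun x j hj => by
      have := Nat.find_min (hφex x) hj; omega
    have hφgt : ∀ x, x < φ x := by
      intro x; by_contra h; push_neg at h
      have h1 := pmono h
      have h2 := hφ x
      omega
    have hφle : ∀ x, φ x ≤ x + t := fun x =>
      Nat.find_min' _ (by rw [hs]; exact pstep_t x)
    have hφmono : Monotone φ := fun a b hab =>
      Nat.find_min' _ ((Nat.add_le_add_right (pmono hab) s).trans (hφ b))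
    have hφm1 : ∀ x, m ≤ φ (x + m) := by
      intro x; by_contra h; push_neg at h
      have h2 := hφ (x + m)
      have h3 : p (φ (x + m)) ≤ p m := pmono h.le
      have h4 : p m = p 0 + n := by have := hper 0; rw [zero_add] at this; exact this
      have h5 : p 0 ≤ p x := pmono (Nat.zero_le x)
      rw [hper x] at h2
      omega
    have hφadd : ∀ x, φ (x + m) = φ x + m := by
      intro x
      apply le_antisymm
      · apply Nat.find_min'
        rw [hper x, hper (φ x)]
        have := hφ x; omega
      · have h1 := hφm1 x
        have h3 : φ (x + m) - m + m = φ (x + m) := by omega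
        have h4 := hφ (x + m)
        rw [hper x] at h4
        have h2 := hper (φ (x + m) - m)
        rw [h3] at h2
        have h5 : p x + s ≤ p (φ (x + m) - m) := by omega
        have h6 : φ x ≤ φ (x + m) - m := Nat.find_min' (hφex x) h5
        omega
    have hφmul : ∀ c x, φ (x + c * m) = φ x + c * m := by
      intro c; induction c with
      | zero => simp
      | succ c ih =>
        intro x
        have e1 : x + (c + 1) * m = x + c * m + m := by ring
        have e2 : φ x + (c + 1) * m = φ x + c * m + m := by ring
        rw [e1, hφadd, ih, e2]
    have hitermono : ∀ r, Monotone (φ^[r]) := fun r => hφmono.iterate r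
    have hiteradd : ∀ r c x, φ^[r] (x + c * m) = φ^[r] x + c * m := by
      intro r; induction r with
      | zero => simp
      | succ r ih =>
        intro c x
        rw [Function.iterate_succ_apply', Function.iterate_succ_apply', ih, hφmul]
    have hiterlt : ∀ r x, x + r ≤ φ^[r] x := by
      intro r; induction r with
      | zero => simp
      | succ r ih =>
        intro x
        rw [Function.iterate_succ_apply']
        have h1 := hφgt (φ^[r] x)
        have h2 := ih x
        omega
    have hcross : ∀ x, p (φ x) + 1 ≤ p x + s + G (φ x - 1) := by
      intro x
      have h0 := hφgt x
      have h1 : φ x - 1 < φ x := by omega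
      have h2 := hφmin x _ h1
      have h3 : φ x - 1 + 1 = φ x := by omega
      have h4 := hG (φ x - 1)
      rw [h3] at h4
      omega
    by_cases hex : ∃ i, φ^[K + 1] i ≤ i + m
    · obtain ⟨i, hi⟩ := hex
      refine ⟨fun r => φ^[r] i, fun r => ?_, ?_⟩
      · show p (φ^[r] i) + s ≤ p (φ^[r + 1] i)
        rw [Function.iterate_succ_apply']; exact hφ _
      · have h1 : p (φ^[K + 1] i) ≤ p (i + m) := pmono hi
        have h2 : p (φ^[K] i) + s ≤ p (φ^[K + 1] i) := by
          rw [Function.iterate_succ_apply']; exact hφ _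
        show p (φ^[K] i) + s ≤ p (φ^[0] i + m)
        simp only [Function.iterate_zero_apply]
        omega
    · exfalso
      push_neg at hex
      have hchain : ∀ q x, 1 ≤ q → x + q * m + 1 ≤ φ^[(K + 1) * q] x := by
        intro q
        induction q with
        | zero => intro x h; omega
        | succ q ih =>
          intro x _
          by_cases hq : q = 0
          · subst hq
            have := hex x
            simpa using this
          · have hq1 : 1 ≤ q := by omega
            have e1 : (K + 1) * (q + 1) = (K + 1) * q + (K + 1) := by ring
            rw [e1, Function.iterate_add_apply]
            have h2 : x + 1 + m ≤ φ^[K + 1] x := by have := hex x; omega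
            have h3 : φ^[(K + 1) * q] (x + 1 + m) ≤ φ^[(K + 1) * q] (φ^[K + 1] x) :=
              hitermono _ h2
            have h4 : φ^[(K + 1) * q] (x + 1 + m) = φ^[(K + 1) * q] (x + 1) + m := by
              have := hiteradd ((K + 1) * q) 1 (x + 1)
              rw [one_mul] at this
              exact this
            have h5 := ih (x + 1) hq1
            have e2 : (q + 1) * m = q * m + m := by ring
            linarith
      set g : Fin m → Fin m := fun a => ⟨φ (a : ℕ) % m, Nat.mod_lt _ hm0⟩ with hgdef
      have hgval : ∀ a : Fin m, (g a : ℕ) = φ (a : ℕ) % m := fun a => rfl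
      have hgiter : ∀ (r : ℕ) (a : Fin m), (g^[r] a : ℕ) = φ^[r] (a : ℕ) % m := by
        intro r
        induction r with
        | zero => intro a; simp [Nat.mod_eq_of_lt a.isLt]
        | succ r ih =>
          intro a
          rw [Function.iterate_succ_apply', Function.iterate_succ_apply', hgval, ih]
          set y := φ^[r] (a : ℕ) with hy
          conv_rhs => rw [show y = y % m + y / m * m from (Nat.mod_add_div' y m).symm]
          rw [hφmul (y / m) (y % m), Nat.add_mul_mod_self_right]
      obtain ⟨x1, y1, hne, heq⟩ := Fintype.exists_ne_map_eq_of_card_lt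
        (fun j : Fin (m + 1) => g^[(j : ℕ)] ⟨0, hm0⟩) (by simp)
      have hswap : ∃ a b : ℕ, a < b ∧ g^[a] ⟨0, hm0⟩ = g^[b] ⟨0, hm0⟩ := by
        rcases lt_or_gt_of_ne hne with h | h
        · exact ⟨x1, y1, h, heq⟩
        · exact ⟨y1, x1, h, heq.symm⟩
      obtain ⟨a, b, hab, hcyc0⟩ := hswap
      set u : Fin m := g^[a] ⟨0, hm0⟩ with hu
      have hper0 : ∃ d, 0 < d ∧ g^[d] u = u := by
        refine ⟨b - a, by omega, ?_⟩
        rw [hu, ← Function.iterate_add_apply]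
        have e : b - a + a = b := by omega
        rw [e, ← hcyc0]
      set ℓ := Nat.find hper0 with hℓ
      obtain ⟨hℓpos, hℓeq⟩ : 0 < ℓ ∧ g^[ℓ] u = u := Nat.find_spec hper0
      have hℓmin : ∀ d, 0 < d → g^[d] u = u → ℓ ≤ d := fun d h1 h2 =>
        Nat.find_min' hper0 ⟨h1, h2⟩
      have hvne : ∀ j1 j2, j1 < j2 → j2 < ℓ → g^[j1 + 1] u ≠ g^[j2 + 1] u := by
        intro j1 j2 h12 h2ℓ hequ
        obtain ⟨d, hd⟩ : ∃ d, ℓ = (j2 + 1) + d := ⟨ℓ - (j2 + 1), by omega⟩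
        have h3 : g^[d] (g^[j2 + 1] u) = u := by
          rw [← Function.iterate_add_apply]
          have e : d + (j2 + 1) = ℓ := by omega
          rw [e, hℓeq]
        rw [← hequ, ← Function.iterate_add_apply] at h3
        have h4 := hℓmin (d + (j1 + 1)) (by omega) h3
        omega
      set X : ℕ → ℕ := fun j => φ^[j] ((u : ℕ)) with hX
      have hXmod : ∀ j, X j % m = (g^[j] u : ℕ) := by
        intro j
        simp only [hX]
        exact (hgiter j u).symm
      have hXsucc : ∀ j, X (j + 1) = φ (X j) := by
        intro j; simp only [hX]; rw [Function.iterate_succ_apply']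
      have hXub : ∀ j, X j ≤ (u : ℕ) + j * t := by
        intro j; induction j with
        | zero => simp [hX]
        | succ j ih =>
          have h1 := hXsucc j
          have h2 := hφle (X j)
          have e : (j + 1) * t = j * t + t := by ring
          rw [h1] at *
          linarith
      have hXlb : ∀ j, (u : ℕ) + j ≤ X j := fun j => hiterlt j _
      obtain ⟨w, hw⟩ : ∃ w, X ℓ = (u : ℕ) + w * m := by
        have h1 : X ℓ % m = (u : ℕ) % m := by
          rw [hXmod ℓ, hℓeq, Nat.mod_eq_of_lt u.isLt]
        have h2 : (u : ℕ) ≤ X ℓ := le_trans (by omega) (hXlb ℓ)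
        have h3 : m ∣ X ℓ - (u : ℕ) := (Nat.modEq_iff_dvd' h2).mp h1.symm
        obtain ⟨c, hc⟩ := h3
        refine ⟨c, ?_⟩
        have e1 := Nat.sub_add_cancel h2
        rw [hc] at e1
        linarith [mul_comm m c]
      have hw1 : 1 ≤ w := by
        have h1 := hXlb ℓ
        rw [hw] at h1
        by_contra h; push_neg at h
        have hw0 : w = 0 := by omega
        rw [hw0] at h1; simp at h1; omega
      have hXc : ∀ c, φ^[ℓ * c] ((u : ℕ)) = (u : ℕ) + c * (w * m) := by
        intro c; induction c with
        | zero => simp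
        | succ c ih =>
          have e1 : ℓ * (c + 1) = ℓ * c + ℓ := by ring
          rw [e1, Function.iterate_add_apply]
          have e2 : φ^[ℓ] ((u : ℕ)) = (u : ℕ) + w * m := hw
          rw [e2, hiteradd, ih]
          ring
      have hℓb : ℓ + 1 ≤ (K + 1) * w := by
        have h1 := hchain ℓ (u : ℕ) (by omega)
        have h2 : φ^[(K + 1) * ℓ] ((u : ℕ)) = (u : ℕ) + (K + 1) * (w * m) := by
          rw [mul_comm (K + 1) ℓ]; exact hXc (K + 1)
        rw [h2] at h1
        have h3 : ℓ * m < (K + 1) * w * m := by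
          have e : (K + 1) * (w * m) = (K + 1) * w * m := by ring
          linarith
        have h4 := lt_of_mul_lt_mul_right h3 (Nat.zero_le m)
        omega
      have hwm : w * m ≤ ℓ * t := by
        have h1 := hXub ℓ
        rw [hw] at h1
        linarith
      have hw2 : 2 ≤ w := by
        have h1 : (ℓ + 1) * t ≤ (K + 1) * w * t := Nat.mul_le_mul_right t hℓb
        have e1 : (ℓ + 1) * t = ℓ * t + t := by ring
        have e2 : w * m = w * t * K + w := by rw [hm, htK]; ring
        have e3 : (K + 1) * w * t = w * t * K + w * t := by ring
        have h2 : w + t ≤ w * t := by linarith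
        by_contra h; push_neg at h
        have hw0 : w = 1 := by omega
        rw [hw0, one_mul] at h2; omega
      have hTel : ∀ c, p (X c) + c ≤ p ((u : ℕ)) + c * s + ∑ j ∈ Finset.range c, G (X (j + 1) - 1) := by
        intro c; induction c with
        | zero => simp [hX]
        | succ c ih =>
          have h1 := hXsucc c
          have h2 := hcross (X c)
          rw [← h1] at h2
          rw [Finset.sum_range_succ]
          have e : (c + 1) * s = c * s + s := by ring
          linarith
      have hXpos : ∀ j, 1 ≤ X (j + 1) := fun j => le_trans (by omega) (hXlb (j + 1))
      have hmodshift : ∀ a' b', 1 ≤ a' → 1 ≤ b' →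
          (a' - 1) % m = (b' - 1) % m → a' % m = b' % m := by
        intro a' b' ha hb h
        have h1 : ((a' - 1) % m + 1) % m = ((b' - 1) % m + 1) % m := by rw [h]
        rw [Nat.mod_add_mod, Nat.mod_add_mod, Nat.sub_add_cancel ha, Nat.sub_add_cancel hb] at h1
        exact h1
      have heinj : ∀ j1 ∈ Finset.range ℓ, ∀ j2 ∈ Finset.range ℓ,
          (X (j1 + 1) - 1) % m = (X (j2 + 1) - 1) % m → j1 = j2 := by
        intro j1 h1 j2 h2 hee
        simp only [Finset.mem_range] at h1 h2
        have h3 : X (j1 + 1) % m = X (j2 + 1) % m :=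
          hmodshift _ _ (hXpos j1) (hXpos j2) hee
        rw [hXmod, hXmod] at h3
        have h4 : g^[j1 + 1] u = g^[j2 + 1] u := Fin.val_injective h3
        rcases lt_trichotomy j1 j2 with h | h | h
        · exact absurd h4 (hvne _ _ h h2)
        · exact h
        · exact absurd h4.symm (hvne _ _ h h1)
      have hEcard : ((Finset.range ℓ).image (fun j => (X (j + 1) - 1) % m)).card = ℓ := by
        rw [Finset.card_image_of_injOn, Finset.card_range]
        intro x hx y hy hxy
        exact heinj x (by simpa using hx) y (by simpa using hy) hxy
      have hEsub : (Finset.range ℓ).image (fun j => (X (j + 1) - 1) % m) ⊆ Finset.range m := by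
        intro x hx
        obtain ⟨j, _, rfl⟩ := Finset.mem_image.mp hx
        exact Finset.mem_range.mpr (Nat.mod_lt _ hm0)
      have htot : ∑ i ∈ Finset.range m, G i = n := by
        have htel : ∀ N, p N = p 0 + ∑ j ∈ Finset.range N, G j := by
          intro N; induction N with
          | zero => simp
          | succ N ih =>
            rw [Finset.sum_range_succ, hG N, ih]
            ring
        have h1 := htel m
        have h2 := hper 0
        rw [zero_add] at h2
        omega
      have hcompl : 2 * (m - ℓ) ≤ ∑ i ∈ Finset.range m \ (Finset.range ℓ).image (fun j => (X (j + 1) - 1) % m), G i := by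
        have hcard : (Finset.range m \ (Finset.range ℓ).image (fun j => (X (j + 1) - 1) % m)).card = m - ℓ := by
          rw [Finset.card_sdiff_of_subset hEsub, Finset.card_range, hEcard]
        calc 2 * (m - ℓ) = (Finset.range m \ (Finset.range ℓ).image (fun j => (X (j + 1) - 1) % m)).card • 2 := by
              rw [hcard, smul_eq_mul]; ring
        _ ≤ _ := Finset.card_nsmul_le_sum _ _ _ (fun x _ => hG2 x)
      have hsplit : ∑ i ∈ Finset.range m \ (Finset.range ℓ).image (fun j => (X (j + 1) - 1) % m), G i
          + ∑ i ∈ (Finset.range ℓ).image (fun j => (X (j + 1) - 1) % m), G i = n := by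
        rw [Finset.sum_sdiff hEsub, htot]
      have himg : ∑ i ∈ (Finset.range ℓ).image (fun j => (X (j + 1) - 1) % m), G i
          = ∑ j ∈ Finset.range ℓ, G ((X (j + 1) - 1) % m) :=
        Finset.sum_image heinj
      have hlm : ℓ ≤ m := by
        have := Finset.card_le_card hEsub
        rw [hEcard, Finset.card_range] at this
        exact this
      have hGsum : ∑ j ∈ Finset.range ℓ, G (X (j + 1) - 1) + 2 * m ≤ n + 2 * ℓ := by
        have h1 : ∑ j ∈ Finset.range ℓ, G (X (j + 1) - 1)
            = ∑ j ∈ Finset.range ℓ, G ((X (j + 1) - 1) % m) :=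
          Finset.sum_congr rfl (fun j _ => hGmod _)
        omega
      have pmul : ∀ c x, p (x + c * m) = p x + c * n := by
        intro c; induction c with
        | zero => simp
        | succ c ih =>
          intro x
          have e1 : x + (c + 1) * m = x + c * m + m := by ring
          rw [e1, hper, ih]
          ring
      have hpX : p (X ℓ) = p ((u : ℕ)) + w * n := by rw [hw, pmul]
      have hfin1 : w * n + ℓ + 2 * m ≤ ℓ * s + n + 2 * ℓ := by
        have h1 := hTel ℓ
        rw [hpX] at h1
        linarith [hGsum]
      have hZ1 : (w : ℤ) * n + ℓ + 2 * m ≤ ℓ * s + n + 2 * ℓ := by exact_mod_cast hfin1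
      have hZ2 : (ℓ : ℤ) + 1 ≤ ((K : ℤ) + 1) * w := by exact_mod_cast hℓb
      have hZ3 : ((s : ℤ) + 2) * ((K : ℤ) + 1) ≤ (n : ℤ) + 2 := by exact_mod_cast hn
      have hZ4 : (2 : ℤ) ≤ (w : ℤ) := by exact_mod_cast hw2
      have hZ5 : (1 : ℤ) ≤ (K : ℤ) := by exact_mod_cast hK
      have hmZ : (m : ℤ) = (t : ℤ) * (K : ℤ) + 1 := by
        rw [hm, htK]; push_cast; ring
      have hZ7 : (s : ℤ) = 2 * (t : ℤ) := by exact_mod_cast hs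
      have hP1 : ((ℓ : ℤ) + 1) * ((s : ℤ) + 1) ≤ ((K : ℤ) + 1) * w * ((s : ℤ) + 1) := by
        apply mul_le_mul_of_nonneg_right hZ2
        positivity
      have hP2 : ((s : ℤ) + 2) * ((K : ℤ) + 1) * ((w : ℤ) - 1) ≤ ((n : ℤ) + 2) * ((w : ℤ) - 1) := by
        apply mul_le_mul_of_nonneg_right hZ3
        linarith
      have hP3 : (0 : ℤ) ≤ ((K : ℤ) - 1) * ((w : ℤ) - 2) :=
        mul_nonneg (by linarith) (by linarith)
      rw [hZ7] at hZ1 hP1 hP2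
      rw [hmZ] at hZ1
      linarith [hZ1, hP1, hP2, hP3]

theorem two_stable_contains_s_stable (n k s : ℕ) (hn : 0 < n) (hk : 0 < k)
    (hs : 0 < s) (hse : Even s) (hbig : (s + 2) * k - 2 ≤ n)
    (S : Finset ℕ) (hSsub : S ⊆ Finset.Icc 1 n) (hstab : IsStable n 2 S)
    (hcard : S.card = s / 2 * (k - 1) + 1) :
    ∃ T ⊆ S, T.card = k ∧ IsStable n s T := by
  obtain ⟨t, hst⟩ := hse
  have hst2 : s = 2 * t := by omega
  have ht1 : 1 ≤ t := by omega
  rcases eq_or_lt_of_le (show 1 ≤ k from hk) with hk1 | hk2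
  · -- k = 1
    refine ⟨S, subset_rfl, ?_, ?_⟩
    · rw [hcard, ← hk1]; simp
    · intro i hi j hj hij
      exfalso
      have h1 : S.card = 1 := by rw [hcard, ← hk1]; simp
      have h2 := Finset.card_le_one.mp (le_of_eq h1) i hi j hj
      omega
  · -- k ≥ 2
    have hk1K : k = (k - 1) + 1 := by omega
    set K := k - 1 with hKdef
    have hK1 : 1 ≤ K := by omega
    have hm : S.card = t * K + 1 := by
      rw [hcard]
      have h1 : s / 2 = t := by omega
      rw [h1]
    set m := t * K + 1 with hmdef
    have hm0 : 0 < m := by omega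
    have hm2 : 2 ≤ m := by
      have : 1 ≤ t * K := Nat.one_le_iff_ne_zero.mpr (by positivity)
      omega
    have hn2 : 2 ≤ n := by
      have h1 : 2 * 2 ≤ (s + 2) * k := Nat.mul_le_mul (by omega) (by omega)
      omega
    set Q : Fin m → ℕ := fun a => ((S.orderIsoOfFin hm) a : ℕ) with hQ
    have hQmem : ∀ a, Q a ∈ S := fun a => ((S.orderIsoOfFin hm) a).2
    have hQmono : ∀ {a b : Fin m}, a < b → Q a < Q b := by
      intro a b h
      exact Subtype.coe_lt_coe.mpr ((S.orderIsoOfFin hm).lt_iff_lt.mpr h)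
    have hQinj : ∀ {a b : Fin m}, Q a = Q b → a = b := by
      intro a b h
      exact (S.orderIsoOfFin hm).injective (Subtype.coe_injective h)
    have hQgaps : ∀ (a : ℕ) (h : a + 1 < m), Q ⟨a, by omega⟩ + 2 ≤ Q ⟨a + 1, h⟩ := by
      intro a h
      have hlt : Q ⟨a, by omega⟩ < Q ⟨a + 1, h⟩ := hQmono (by simp [Fin.lt_def])
      have := hstab _ (hQmem _) _ (hQmem _) hlt
      omega
    have hQspan : Q ⟨m - 1, by omega⟩ + 2 ≤ Q ⟨0, hm0⟩ + n := by
      have h0m : (⟨0, hm0⟩ : Fin m) < ⟨m - 1, by omega⟩ := by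
        simp [Fin.lt_def]; omega
      have hlt := hQmono h0m
      have := hstab _ (hQmem _) _ (hQmem _) hlt
      omega
    set p : ℕ → ℕ := fun x => Q ⟨x % m, Nat.mod_lt x hm0⟩ + x / m * n with hp
    have hstep : ∀ x, p x + 2 ≤ p (x + 1) := by
      intro x
      have hdecomp := Nat.div_add_mod x m
      by_cases h : x % m + 1 < m
      · have h1 : (x + 1) % m = x % m + 1 := by
          conv_lhs => rw [← hdecomp]
          rw [add_assoc, Nat.mul_add_mod]
          exact Nat.mod_eq_of_lt h
        have h2 : (x + 1) / m = x / m := by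
          conv_lhs => rw [← hdecomp]
          rw [add_assoc, Nat.mul_add_div hm0]
          rw [Nat.div_eq_of_lt h, add_zero]
        have hfin : (⟨(x + 1) % m, Nat.mod_lt (x + 1) hm0⟩ : Fin m) = ⟨x % m + 1, h⟩ :=
          Fin.ext h1
        simp only [hp, hfin, h2]
        have := hQgaps (x % m) h
        omega
      · have hxm : x % m = m - 1 := by
          have := Nat.mod_lt x hm0
          omega
        have hx1 : x + 1 = m * (x / m + 1) := by
          have e : m * (x / m + 1) = m * (x / m) + m := by ring
          omega
        have h1 : (x + 1) % m = 0 := by rw [hx1, Nat.mul_mod_right]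
        have h2 : (x + 1) / m = x / m + 1 := by
          rw [hx1, Nat.mul_div_cancel_left _ hm0]
        have hfin1 : (⟨(x + 1) % m, Nat.mod_lt (x + 1) hm0⟩ : Fin m) = ⟨0, hm0⟩ :=
          Fin.ext h1
        have hfin2 : (⟨x % m, Nat.mod_lt x hm0⟩ : Fin m) = ⟨m - 1, by omega⟩ :=
          Fin.ext hxm
        simp only [hp, hfin1, hfin2, h2]
        have e : (x / m + 1) * n = x / m * n + n := by ring
        rw [e]
        have := hQspan
        omega
    have hper : ∀ x, p (x + m) = p x + n := by
      intro x
      have h1 : (x + m) % m = x % m := Nat.add_mod_right x m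
      have h2 : (x + m) / m = x / m + 1 := Nat.add_div_right x hm0
      have hfin : (⟨(x + m) % m, Nat.mod_lt (x + m) hm0⟩ : Fin m) = ⟨x % m, Nat.mod_lt x hm0⟩ :=
        Fin.ext h1
      simp only [hp, hfin, h2]
      ring
    have hbign : (s + 2) * (K + 1) ≤ n + 2 := by
      have hA : (s + 2) * (K + 1) = (s + 2) * k := by rw [← hk1K]
      rw [hA]
      omega
    obtain ⟨J, hJcons, hJwrap⟩ :=
      exists_selection m n s t K p ht1 hK1 hst2 hmdef hbign hstep hper
    have pstrict : StrictMono p := strictMono_nat_of_lt_succ fun x => by have := hstep x; omega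
    have pmono : Monotone p := pstrict.monotone
    have hslb : 2 ≤ s := by omega
    have hJlt : ∀ r, J r < J (r + 1) := fun r =>
      pstrict.lt_iff_lt.mp (by have := hJcons r; omega)
    have hJmono : Monotone J := monotone_nat_of_le_succ fun r => (hJlt r).le
    have hpair : ∀ a b, a < b → p (J a) + s ≤ p (J b) := by
      intro a b hab
      induction b with
      | zero => omega
      | succ b ih =>
        rcases Nat.lt_or_ge a b with h | h
        · have h1 := ih h
          have h2 := pmono (hJlt b).le
          omega
        · have hab2 : a = b := by omega
          subst hab2
          exact hJcons a
    have hub : ∀ a b, a ≤ K → b ≤ K → p (J b) + s ≤ p (J a) + n := by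
      intro a b ha hb
      have h1 : p (J b) ≤ p (J K) := pmono (hJmono hb)
      have h2 : p (J 0) ≤ p (J a) := pmono (hJmono (Nat.zero_le a))
      have h3 : p (J 0 + m) = p (J 0) + n := hper _
      omega
    have hJwin : ∀ r, r ≤ K → J r < J 0 + m := by
      intro r hr
      have h1 : p (J r) ≤ p (J K) := pmono (hJmono hr)
      have h2 : p (J r) < p (J 0 + m) := by have := hJwrap; omega
      exact pstrict.lt_iff_lt.mp h2
    set V : ℕ → ℕ := fun r => Q ⟨J r % m, Nat.mod_lt _ hm0⟩ with hV
    have hpJ : ∀ r, p (J r) = V r + J r / m * n := fun r => rfl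
    have hlapmono : ∀ a b, a ≤ b → J a / m ≤ J b / m := fun a b h =>
      Nat.div_le_div_right (hJmono h)
    have hlapsucc : ∀ a b, b ≤ K → J b / m ≤ J a / m + 1 := by
      intro a b hb
      have h1 : J b < J 0 + m := hJwin b hb
      have h2 : J 0 ≤ J a := hJmono (Nat.zero_le a)
      have h3 : J b ≤ J a + m := by omega
      have h4 : J b / m ≤ (J a + m) / m := Nat.div_le_div_right h3
      rw [Nat.add_div_right _ hm0] at h4
      exact h4
    have hVpair : ∀ a b, a < b → b ≤ K →
        (V a + s ≤ V b ∧ V b + s ≤ V a + n) ∨ (V b + s ≤ V a ∧ V a + s ≤ V b + n) := by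
      intro a b hab hbK
      have hc := hpair a b hab
      have hu := hub a b (by omega) hbK
      have hl1 : J a / m ≤ J b / m := hlapmono a b hab.le
      have hl2 : J b / m ≤ J a / m + 1 := hlapsucc a b hbK
      have e1 := hpJ a
      have e2 := hpJ b
      have hcase : J b / m = J a / m ∨ J b / m = J a / m + 1 := by omega
      rcases hcase with h | h
      · left
        rw [e1, e2, h] at hc hu
        constructor <;> linarith
      · right
        rw [e1, e2, h] at hc hu
        have e4 : (J a / m + 1) * n = J a / m * n + n := by ring
        rw [e4] at hc hu
        constructor <;> linarith
    have hVne : ∀ a b, a < b → b ≤ K → V a ≠ V b := by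
      intro a b hab hbK hVeq
      have h1 : J a < J b := by
        have := hpair a b hab
        exact pstrict.lt_iff_lt.mp (by omega)
      have h2 : J b < J a + m := by
        have h3 := hJwin b hbK
        have h4 : J 0 ≤ J a := hJmono (Nat.zero_le a)
        omega
      have hres : J a % m = J b % m := by
        have hfe : (⟨J a % m, Nat.mod_lt _ hm0⟩ : Fin m) = ⟨J b % m, Nat.mod_lt _ hm0⟩ :=
          hQinj hVeq
        exact congrArg Fin.val hfe
      have d1 := Nat.div_add_mod (J a) m
      have d2 := Nat.div_add_mod (J b) m
      have hdiv : J a / m < J b / m := by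
        by_contra hcon
        push_neg at hcon
        have h5 : m * (J b / m) ≤ m * (J a / m) := Nat.mul_le_mul_left m hcon
        omega
      have h6 : J a / m + 1 ≤ J b / m := hdiv
      have h7 : m * (J a / m + 1) ≤ m * (J b / m) := Nat.mul_le_mul_left m h6
      have e : m * (J a / m + 1) = m * (J a / m) + m := by ring
      omega
    refine ⟨(Finset.range (K + 1)).image V, ?_, ?_, ?_⟩
    · intro x hx
      obtain ⟨r, _, rfl⟩ := Finset.mem_image.mp hx
      exact hQmem _
    · rw [Finset.card_image_of_injOn, Finset.card_range, ← hk1K]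
      intro x hx y hy hxy
      simp only [Finset.coe_range, Set.mem_Iio] at hx hy
      by_contra hne
      rcases lt_or_gt_of_ne hne with h | h
      · exact hVne x y h (by omega) hxy
      · exact hVne y x h (by omega) hxy.symm
    · intro x hx y hy hxy
      obtain ⟨a2, ha2, rfl⟩ := Finset.mem_image.mp hx
      obtain ⟨b2, hb2, rfl⟩ := Finset.mem_image.mp hy
      simp only [Finset.mem_range] at ha2 hb2
      have hns : s ≤ n := by
        have h1 : (s + 2) * 1 ≤ (s + 2) * (K + 1) := Nat.mul_le_mul_left _ (by omega)
        rw [mul_one] at h1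
        omega
      have hab : a2 ≠ b2 := fun h => by subst h; exact lt_irrefl _ hxy
      rcases lt_or_gt_of_ne hab with h | h
      · rcases hVpair a2 b2 h (by omega) with ⟨h1, h2⟩ | ⟨h1, h2⟩
        · constructor <;> omega
        · omega
      · rcases hVpair b2 a2 h (by omega) with ⟨h1, h2⟩ | ⟨h1, h2⟩
        · omega
        · constructor <;> omega
end

section
/- Let n, k be positive integers and s a positive integer with n ≥ sk. For each i ∈ [n], the number of s-stable k-subsets of [n] containing i equals C(n - k(s-1) - 1, k-1). -/
open Finset


lemma gapLow (s l : ℕ) (T : Finset ℕ)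
    (hT : ∀ a ∈ T, ∀ b ∈ T, a < b → s ≤ b - a)
    (hlb : ∀ a ∈ T, l + s ≤ a) :
    ∀ x ∈ T, l + s * (T.filter (· < x)).card + s ≤ x := by
  suffices H : ∀ c, ∀ x ∈ T, (T.filter (· < x)).card = c → l + s * c + s ≤ x by
    intro x hx; exact H _ x hx rfl
  intro c
  induction c with
  | zero => intro x hx _; have := hlb x hx; omega
  | succ c ih =>
    intro x hx hc
    have hne : (T.filter (· < x)).Nonempty := card_pos.mp (by omega)
    set y := (T.filter (· < x)).max' hne with hy
    have hymem : y ∈ T.filter (· < x) := max'_mem _ hne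
    obtain ⟨hyT, hyx⟩ := mem_filter.mp hymem
    have hfe : T.filter (· < y) = (T.filter (· < x)).erase y := by
      ext z
      simp only [mem_filter, mem_erase]
      constructor
      · rintro ⟨hz, hzy⟩; exact ⟨by omega, hz, by omega⟩
      · rintro ⟨hne', hz, hzx⟩
        have hle : z ≤ y := le_max' (T.filter (· < x)) z (mem_filter.mpr ⟨hz, hzx⟩)
        exact ⟨hz, by omega⟩
    have hcard : (T.filter (· < y)).card = c := by
      rw [hfe, card_erase_of_mem hymem]; omega
    have h1 := ih y hyT hcard
    have h2 := hT y hyT x hx hyx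
    have h3 : s * (c + 1) = s * c + s := by ring
    omega

lemma gapHigh (s u : ℕ) (T : Finset ℕ)
    (hT : ∀ a ∈ T, ∀ b ∈ T, a < b → s ≤ b - a)
    (hub : ∀ a ∈ T, a + s ≤ u) :
    ∀ x ∈ T, x + s * (T.filter (x < ·)).card + s ≤ u := by
  suffices H : ∀ c, ∀ x ∈ T, (T.filter (x < ·)).card = c → x + s * c + s ≤ u by
    intro x hx; exact H _ x hx rfl
  intro c
  induction c with
  | zero => intro x hx _; have := hub x hx; omega
  | succ c ih =>
    intro x hx hc
    have hne : (T.filter (x < ·)).Nonempty := card_pos.mp (by omega)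
    set y := (T.filter (x < ·)).min' hne with hy
    have hymem : y ∈ T.filter (x < ·) := min'_mem _ hne
    obtain ⟨hyT, hyx⟩ := mem_filter.mp hymem
    have hfe : T.filter (y < ·) = (T.filter (x < ·)).erase y := by
      ext z
      simp only [mem_filter, mem_erase]
      constructor
      · rintro ⟨hz, hzy⟩; exact ⟨by omega, hz, by omega⟩
      · rintro ⟨hne', hz, hzx⟩
        have hle : y ≤ z := min'_le (T.filter (x < ·)) z (mem_filter.mpr ⟨hz, hzx⟩)
        exact ⟨hz, by omega⟩
    have hcard : (T.filter (y < ·)).card = c := by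
      rw [hfe, card_erase_of_mem hymem]; omega
    have h1 := ih y hyT hcard
    have h2 := hT x hx y hyT hyx
    have h3 : s * (c + 1) = s * c + s := by ring
    omega

lemma monoInjOn (T : Finset ℕ) (f : ℕ → ℕ)
    (hf : ∀ a ∈ T, ∀ b ∈ T, a < b → f a < f b) : Set.InjOn f ↑T := by
  intro a ha b hb h
  simp only [Finset.mem_coe] at ha hb
  rcases lt_trichotomy a b with h' | h' | h'
  · have := hf a ha b hb h'; omega
  · exact h'
  · have := hf b hb a ha h'; omega

lemma monoFilterCard (T : Finset ℕ) (f : ℕ → ℕ)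
    (hf : ∀ a ∈ T, ∀ b ∈ T, a < b → f a < f b) (x : ℕ) (hx : x ∈ T) :
    ((T.image f).filter (· < f x)).card = (T.filter (· < x)).card := by
  have himg : (T.image f).filter (· < f x) = (T.filter (· < x)).image f := by
    ext w
    simp only [mem_filter, mem_image]
    constructor
    · rintro ⟨⟨z, hz, rfl⟩, hlt⟩
      refine ⟨z, ⟨hz, ?_⟩, rfl⟩
      by_contra h
      rcases eq_or_lt_of_le (not_lt.mp h) with h' | h'
      · subst h'; omega
      · have := hf x hx z hz h'; omega
    · rintro ⟨z, ⟨hz, hzx⟩, rfl⟩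
      exact ⟨⟨z, hz, rfl⟩, hf z hz x hx hzx⟩
  rw [himg, card_image_of_injOn ((monoInjOn T f hf).mono (by
    exact_mod_cast Finset.filter_subset _ _))]

def rhoMap (n i a : ℕ) : ℕ := if i ≤ a then a - i else a + n - i
def sigMap (n i x : ℕ) : ℕ := if x + i ≤ n then x + i else x + i - n

lemma sig_rho (n i a : ℕ) (h1 : 1 ≤ i) (h2 : i ≤ n) (ha : 1 ≤ a) (ha2 : a ≤ n) :
    sigMap n i (rhoMap n i a) = a := by
  unfold rhoMap sigMap; split_ifs <;> omega

lemma rho_sig (n i x : ℕ) (h1 : 1 ≤ i) (h2 : i ≤ n) (hx : x ≤ n - 1) :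
    rhoMap n i (sigMap n i x) = x := by
  unfold rhoMap sigMap; split_ifs <;> omega

lemma rho_pair (n s i a b : ℕ) (h1 : 1 ≤ i) (h2 : i ≤ n)
    (ha : 1 ≤ a) (ha2 : a ≤ n) (hb : 1 ≤ b) (hb2 : b ≤ n)
    (hab : a < b → s ≤ b - a ∧ b - a ≤ n - s)
    (hba : b < a → s ≤ a - b ∧ a - b ≤ n - s)
    (hlt : rhoMap n i a < rhoMap n i b) :
    s ≤ rhoMap n i b - rhoMap n i a ∧ rhoMap n i b - rhoMap n i a ≤ n - s := by
  unfold rhoMap at *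
  rcases lt_trichotomy a b with h | h | h
  · obtain ⟨u, v⟩ := hab h; split_ifs at * <;> omega
  · subst h; omega
  · obtain ⟨u, v⟩ := hba h; split_ifs at * <;> omega

lemma sig_pair (n s i x y : ℕ) (h1 : 1 ≤ i) (h2 : i ≤ n)
    (hx : x ≤ n - 1) (hy : y ≤ n - 1)
    (hxy : x < y → s ≤ y - x ∧ y - x ≤ n - s)
    (hyx : y < x → s ≤ x - y ∧ x - y ≤ n - s)
    (hlt : sigMap n i x < sigMap n i y) :
    s ≤ sigMap n i y - sigMap n i x ∧ sigMap n i y - sigMap n i x ≤ n - s := by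
  unfold sigMap at *
  rcases lt_trichotomy x y with h | h | h
  · obtain ⟨u, v⟩ := hxy h; split_ifs at * <;> omega
  · subst h; omega
  · obtain ⟨u, v⟩ := hyx h; split_ifs at * <;> omega

lemma sig_i (n s i x : ℕ) (h1 : 1 ≤ i) (h2 : i ≤ n) (hs : 1 ≤ s)
    (hx1 : s ≤ x) (hx2 : x ≤ n - s) :
    (i < sigMap n i x → s ≤ sigMap n i x - i ∧ sigMap n i x - i ≤ n - s) ∧
    (sigMap n i x < i → s ≤ i - sigMap n i x ∧ i - sigMap n i x ≤ n - s) := by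
  unfold sigMap; split_ifs <;> constructor <;> intro h <;> omega

lemma rho_i (n s i a : ℕ) (h1 : 1 ≤ i) (h2 : i ≤ n)
    (ha : 1 ≤ a) (ha2 : a ≤ n) (hne : a ≠ i)
    (hia : i < a → s ≤ a - i ∧ a - i ≤ n - s)
    (hai : a < i → s ≤ i - a ∧ i - a ≤ n - s) :
    s ≤ rhoMap n i a ∧ rhoMap n i a ≤ n - s := by
  unfold rhoMap
  rcases lt_trichotomy a i with h | h | h
  · obtain ⟨u, v⟩ := hai h; split_ifs <;> omega
  · exact absurd h hne
  · obtain ⟨u, v⟩ := hia h; split_ifs <;> omega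

lemma sig_ne_i (n s i x : ℕ) (h1 : 1 ≤ i) (h2 : i ≤ n) (hs : 1 ≤ s)
    (hx1 : s ≤ x) (hx2 : x ≤ n - s) : sigMap n i x ≠ i := by
  unfold sigMap; split_ifs <;> omega

lemma sig_mem (n i x : ℕ) (h1 : 1 ≤ i) (h2 : i ≤ n) (hx : x ≤ n - 1) :
    1 ≤ sigMap n i x ∧ sigMap n i x ≤ n := by
  unfold sigMap; split_ifs <;> omega
lemma mulSplit (s c : ℕ) (hs : 1 ≤ s) : s * c = (s - 1) * c + c := by
  obtain ⟨t, rfl⟩ : ∃ t, s = t + 1 := ⟨s - 1, by omega⟩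
  simp only [Nat.add_sub_cancel]; ring

/-- lower bound on elements: `(s-1)*(cx+1) + cx + 1 ≤ x`. -/
lemma fLower (s : ℕ) (hs : 1 ≤ s) (T : Finset ℕ)
    (hgap : ∀ a ∈ T, ∀ b ∈ T, a < b → s ≤ b - a)
    (hlb : ∀ a ∈ T, s ≤ a) (x : ℕ) (hx : x ∈ T) :
    (s - 1) * ((T.filter (· < x)).card + 1) + ((T.filter (· < x)).card + 1) ≤ x := by
  have h1 := gapLow s 0 T hgap (fun a ha => by have := hlb a ha; omega) x hx
  have e1 := mulSplit s ((T.filter (· < x)).card + 1) hs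
  have e0 : s * ((T.filter (· < x)).card + 1) = s * (T.filter (· < x)).card + s := by ring
  omega

lemma fMono (s : ℕ) (hs : 1 ≤ s) (T : Finset ℕ)
    (hgap : ∀ a ∈ T, ∀ b ∈ T, a < b → s ≤ b - a)
    (hlb : ∀ a ∈ T, s ≤ a) :
    ∀ x ∈ T, ∀ y ∈ T, x < y →
      x - (s - 1) * ((T.filter (· < x)).card + 1) <
      y - (s - 1) * ((T.filter (· < y)).card + 1) := by
  intro x hx y hy hxy
  have h1 := fLower s hs T hgap hlb x hx
  -- cx + 1 ≤ cy
  have hcxy : (T.filter (· < x)).card + 1 ≤ (T.filter (· < y)).card := by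
    have hsub : insert x (T.filter (· < x)) ⊆ T.filter (· < y) := by
      intro z hz
      rcases mem_insert.mp hz with rfl | hz'
      · exact mem_filter.mpr ⟨hx, hxy⟩
      · obtain ⟨h1', h2'⟩ := mem_filter.mp hz'
        exact mem_filter.mpr ⟨h1', by omega⟩
    have := card_le_card hsub
    rwa [card_insert_of_notMem (by simp)] at this
  -- gap from x to y
  set T' := T.filter (x < ·) with hT'
  have hd := gapLow s x T'
    (fun a ha b hb h => hgap a (mem_of_mem_filter a ha) b (mem_of_mem_filter b hb) h)
    (fun a ha => by
      obtain ⟨h1', h2'⟩ := mem_filter.mp ha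
      have := hgap x hx a h1' h2'; omega)
    y (mem_filter.mpr ⟨hy, hxy⟩)
  -- cy ≤ cx + d + 1
  have hcup : (T.filter (· < y)).card ≤
      (T.filter (· < x)).card + ((T'.filter (· < y)).card + 1) := by
    have hsub2 : T.filter (· < y) ⊆ (T.filter (· < x)) ∪ insert x (T'.filter (· < y)) := by
      intro z hz
      obtain ⟨hzT, hzy⟩ := mem_filter.mp hz
      rcases lt_trichotomy z x with h | h | h
      · exact mem_union_left _ (mem_filter.mpr ⟨hzT, h⟩)
      · exact mem_union_right _ (mem_insert.mpr (Or.inl h))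
      · exact mem_union_right _ (mem_insert.mpr
          (Or.inr (mem_filter.mpr ⟨mem_filter.mpr ⟨hzT, h⟩, hzy⟩)))
    calc (T.filter (· < y)).card ≤ _ := card_le_card hsub2
      _ ≤ (T.filter (· < x)).card + (insert x (T'.filter (· < y))).card := card_union_le _ _
      _ ≤ _ := by have := card_insert_le x (T'.filter (· < y)); omega
  have e2 := mulSplit s ((T'.filter (· < y)).card + 1) hs
  have e0 : s * ((T'.filter (· < y)).card + 1) = s * (T'.filter (· < y)).card + s := by ring
  have e3 : (s - 1) * ((T.filter (· < y)).card + 1) ≤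
      (s - 1) * ((T.filter (· < x)).card + 1) + (s - 1) * ((T'.filter (· < y)).card + 1) := by
    calc (s - 1) * ((T.filter (· < y)).card + 1)
        ≤ (s - 1) * (((T.filter (· < x)).card + 1) + ((T'.filter (· < y)).card + 1)) :=
          Nat.mul_le_mul_left _ (by omega)
      _ = _ := by ring
  set cx := (T.filter (· < x)).card
  set cy := (T.filter (· < y)).card
  set d := (T'.filter (· < y)).card
  set P := (s - 1) * (cx + 1)
  set Q := (s - 1) * (cy + 1)
  set W := (s - 1) * (d + 1)
  omega

/-- upper bound: `f x ≤ m` when card T = k-1 etc. -/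
lemma fUpper (n k s m : ℕ) (hk : 1 ≤ k) (hs : 1 ≤ s) (hmn : m + k * (s - 1) + 1 = n)
    (T : Finset ℕ)
    (hgap : ∀ a ∈ T, ∀ b ∈ T, a < b → s ≤ b - a)
    (hub : ∀ a ∈ T, a + s ≤ n) (hTcard : T.card = k - 1)
    (x : ℕ) (hx : x ∈ T) :
    x - (s - 1) * ((T.filter (· < x)).card + 1) ≤ m := by
  have hhigh := gapHigh s n T hgap hub x hx
  -- card identity: cx + dx + 1 = k - 1
  have hci : (T.filter (· < x)).card + (T.filter (x < ·)).card + 1 = k - 1 := by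
    have hpc := card_filter_add_card_filter_not (s := T) (p := (· < x))
    have hneg : T.filter (fun z => ¬ z < x) = insert x (T.filter (x < ·)) := by
      ext z
      simp only [mem_filter, mem_insert, not_lt]
      constructor
      · rintro ⟨hz, hzx⟩
        rcases eq_or_lt_of_le hzx with h | h
        · exact Or.inl h.symm
        · exact Or.inr ⟨hz, h⟩
      · rintro (rfl | ⟨hz, h⟩)
        · exact ⟨hx, le_refl _⟩
        · exact ⟨hz, le_of_lt h⟩
    rw [hneg, card_insert_of_notMem (by simp)] at hpc
    omega
  have e2 := mulSplit s ((T.filter (x < ·)).card + 1) hs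
  have e0 : s * ((T.filter (x < ·)).card + 1) = s * (T.filter (x < ·)).card + s := by ring
  have hk2 : k * (s - 1) = (s - 1) * ((T.filter (· < x)).card + 1)
      + (s - 1) * ((T.filter (x < ·)).card + 1) := by
    rw [show k = ((T.filter (· < x)).card + 1) + ((T.filter (x < ·)).card + 1) by omega]
    ring
  set cx := (T.filter (· < x)).card
  set dx := (T.filter (x < ·)).card
  set P := (s - 1) * (cx + 1)
  set W := (s - 1) * (dx + 1)
  omega
lemma gMono (s : ℕ) (B : Finset ℕ) :
    ∀ y ∈ B, ∀ y' ∈ B, y < y' →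
      y + (s - 1) * ((B.filter (· < y)).card + 1) <
      y' + (s - 1) * ((B.filter (· < y')).card + 1) := by
  intro y hy y' hy' hlt
  have hc : (B.filter (· < y)).card ≤ (B.filter (· < y')).card := by
    apply card_le_card
    intro z hz
    obtain ⟨h1, h2⟩ := mem_filter.mp hz
    exact mem_filter.mpr ⟨h1, by omega⟩
  have := Nat.mul_le_mul_left (s - 1) (show (B.filter (· < y)).card + 1 ≤ (B.filter (· < y')).card + 1 by omega)
  omega

lemma gCardLt (s : ℕ) (B : Finset ℕ) {y y' : ℕ} (hy : y ∈ B) (hy' : y' ∈ B) (hlt : y < y') :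
    (B.filter (· < y)).card + 1 ≤ (B.filter (· < y')).card := by
  have hsub : insert y (B.filter (· < y)) ⊆ B.filter (· < y') := by
    intro z hz
    rcases mem_insert.mp hz with rfl | hz'
    · exact mem_filter.mpr ⟨hy, hlt⟩
    · obtain ⟨h1, h2⟩ := mem_filter.mp hz'
      exact mem_filter.mpr ⟨h1, by omega⟩
  have := card_le_card hsub
  rwa [card_insert_of_notMem (by simp)] at this

lemma gBounds (n k s m : ℕ) (hk : 1 ≤ k) (hs : 1 ≤ s) (hmn : m + k * (s - 1) + 1 = n)
    (B : Finset ℕ) (hBsub : B ⊆ Finset.Icc 1 m) (hBcard : B.card = k - 1)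
    (y : ℕ) (hy : y ∈ B) :
    s ≤ y + (s - 1) * ((B.filter (· < y)).card + 1) ∧
    y + (s - 1) * ((B.filter (· < y)).card + 1) ≤ n - s := by
  obtain ⟨hy1, hy2⟩ := mem_Icc.mp (hBsub hy)
  have hc : (B.filter (· < y)).card + 1 ≤ k - 1 := by
    have hsub : B.filter (· < y) ⊆ B.erase y := by
      intro z hz
      obtain ⟨h1, h2⟩ := mem_filter.mp hz
      exact mem_erase.mpr ⟨by omega, h1⟩
    have := card_le_card hsub
    rw [card_erase_of_mem hy, hBcard] at this
    have hpos : 1 ≤ k - 1 := by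
      by_contra h
      have : B.card = 0 := by omega
      rw [card_eq_zero] at this
      rw [this] at hy
      exact absurd hy (notMem_empty y)
    omega
  constructor
  · have h1 : s - 1 ≤ (s - 1) * ((B.filter (· < y)).card + 1) :=
      Nat.le_mul_of_pos_right _ (by omega)
    omega
  · have hUV : (s - 1) * ((B.filter (· < y)).card + 1) ≤ (s - 1) * (k - 1) :=
      Nat.mul_le_mul_left _ hc
    have hK : k * (s - 1) = (s - 1) * (k - 1) + (s - 1) := by
      obtain ⟨j, rfl⟩ : ∃ j, k = j + 1 := ⟨k - 1, by omega⟩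
      simp only [Nat.add_sub_cancel]; ring
    set U := (s - 1) * ((B.filter (· < y)).card + 1)
    set V := (s - 1) * (k - 1)
    omega

lemma gGap (s : ℕ) (hs : 1 ≤ s) (B : Finset ℕ) {y y' : ℕ}
    (hy : y ∈ B) (hy' : y' ∈ B) (hlt : y < y') :
    y + (s - 1) * ((B.filter (· < y)).card + 1) + s ≤
    y' + (s - 1) * ((B.filter (· < y')).card + 1) := by
  have hc := gCardLt s B hy hy' hlt
  have hstep : (s - 1) * ((B.filter (· < y)).card + 1) + (s - 1) ≤
      (s - 1) * ((B.filter (· < y')).card + 1) := by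
    calc (s - 1) * ((B.filter (· < y)).card + 1) + (s - 1)
        = (s - 1) * ((B.filter (· < y)).card + 2) := by ring
      _ ≤ _ := Nat.mul_le_mul_left _ (by omega)
  set U := (s - 1) * ((B.filter (· < y)).card + 1)
  set U' := (s - 1) * ((B.filter (· < y')).card + 1)
  omega
open scoped Classical in
lemma stepOne (n k s i : ℕ) (hk : 0 < k) (hs : 0 < s) (hsn : s ≤ n)
    (hi1 : 1 ≤ i) (hi2 : i ≤ n) :
    (((Finset.Icc 1 n).powerset).filter
        (fun A => A.card = k ∧ IsStable n s A ∧ i ∈ A)).card =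
    (((Finset.Icc s (n - s)).powerset).filter
        (fun T => T.card = k - 1 ∧ IsStable n s T)).card := by
  apply Finset.card_bij' (fun A _ => (A.erase i).image (rhoMap n i))
    (fun T _ => insert i (T.image (sigMap n i)))
  · -- left inverse
    intro A hA
    simp only [mem_filter, mem_powerset] at hA
    obtain ⟨hAsub, hAcard, hAst, hiA⟩ := hA
    rw [Finset.image_image]
    have : (A.erase i).image (sigMap n i ∘ rhoMap n i) = A.erase i := by
      rw [Finset.image_congr (g := id), Finset.image_id]
      intro a ha
      simp only [Finset.mem_coe] at ha
      have haA := (mem_erase.mp ha).2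
      obtain ⟨h1, h2⟩ := mem_Icc.mp (hAsub haA)
      exact sig_rho n i a hi1 hi2 h1 h2
    rw [this, insert_erase hiA]
  · -- right inverse
    intro T hT
    simp only [mem_filter, mem_powerset] at hT
    obtain ⟨hTsub, hTcard, hTst⟩ := hT
    have hbound' : ∀ x ∈ T, x ≤ n - 1 := by
      intro x hx; have := mem_Icc.mp (hTsub hx); omega
    have hnotmem : i ∉ T.image (sigMap n i) := by
      intro hmem
      obtain ⟨x, hx, hx2⟩ := mem_image.mp hmem
      obtain ⟨u, v⟩ := mem_Icc.mp (hTsub hx)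
      exact sig_ne_i n s i x hi1 hi2 hs u v hx2
    rw [Finset.erase_insert hnotmem, Finset.image_image]
    rw [Finset.image_congr (g := id), Finset.image_id]
    intro x hx
    simp only [Finset.mem_coe] at hx
    exact rho_sig n i x hi1 hi2 (hbound' x hx)
  · -- forward membership
    intro A hA
    simp only [mem_filter, mem_powerset] at hA
    obtain ⟨hAsub, hAcard, hAst, hiA⟩ := hA
    have hbound : ∀ a ∈ A, 1 ≤ a ∧ a ≤ n := fun a ha => mem_Icc.mp (hAsub ha)
    simp only [mem_filter, mem_powerset]
    refine ⟨?_, ?_, ?_⟩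
    · intro w hw
      obtain ⟨a, ha, rfl⟩ := mem_image.mp hw
      have hane := (mem_erase.mp ha).1
      have haA := (mem_erase.mp ha).2
      obtain ⟨h1, h2⟩ := hbound a haA
      exact mem_Icc.mpr (rho_i n s i a hi1 hi2 h1 h2 hane
        (fun h => hAst i hiA a haA h) (fun h => hAst a haA i hiA h))
    · rw [card_image_of_injOn, card_erase_of_mem hiA, hAcard]
      intro a ha b hb h
      simp only [Finset.coe_erase, Set.mem_diff, Finset.mem_coe] at ha hb
      obtain ⟨h1, h2⟩ := hbound a ha.1
      obtain ⟨h3, h4⟩ := hbound b hb.1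
      have := sig_rho n i a hi1 hi2 h1 h2
      have := sig_rho n i b hi1 hi2 h3 h4
      rw [← sig_rho n i a hi1 hi2 h1 h2, h, sig_rho n i b hi1 hi2 h3 h4]
    · intro x hx y hy hlt
      obtain ⟨a, ha, rfl⟩ := mem_image.mp hx
      obtain ⟨b, hb, rfl⟩ := mem_image.mp hy
      have haA := (mem_erase.mp ha).2
      have hbA := (mem_erase.mp hb).2
      obtain ⟨h1, h2⟩ := hbound a haA
      obtain ⟨h3, h4⟩ := hbound b hbA
      exact rho_pair n s i a b hi1 hi2 h1 h2 h3 h4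
        (fun h => hAst a haA b hbA h) (fun h => hAst b hbA a haA h) hlt
  · -- backward membership
    intro T hT
    simp only [mem_filter, mem_powerset] at hT
    obtain ⟨hTsub, hTcard, hTst⟩ := hT
    have hbound : ∀ x ∈ T, s ≤ x ∧ x ≤ n - s := fun x hx => mem_Icc.mp (hTsub hx)
    have hbound' : ∀ x ∈ T, x ≤ n - 1 := by
      intro x hx; have := hbound x hx; omega
    have hnotmem : i ∉ T.image (sigMap n i) := by
      intro hmem
      obtain ⟨x, hx, hx2⟩ := mem_image.mp hmem
      obtain ⟨u, v⟩ := hbound x hx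
      exact sig_ne_i n s i x hi1 hi2 hs u v hx2
    simp only [mem_filter, mem_powerset]
    refine ⟨?_, ?_, ?_, ?_⟩
    · intro w hw
      rcases mem_insert.mp hw with rfl | hw'
      · exact mem_Icc.mpr ⟨hi1, hi2⟩
      · obtain ⟨x, hx, rfl⟩ := mem_image.mp hw'
        exact mem_Icc.mpr (sig_mem n i x hi1 hi2 (hbound' x hx))
    · rw [card_insert_of_notMem hnotmem, card_image_of_injOn, hTcard]
      · omega
      · intro x hx y hy h
        simp only [Finset.mem_coe] at hx hy
        rw [← rho_sig n i x hi1 hi2 (hbound' x hx), h,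
          rho_sig n i y hi1 hi2 (hbound' y hy)]
    · intro x hx y hy hlt
      rcases mem_insert.mp hx with hxe | hx' <;> rcases mem_insert.mp hy with hye | hy'
      · omega
      · obtain ⟨b, hb, rfl⟩ := mem_image.mp hy'
        obtain ⟨u, v⟩ := hbound b hb
        rw [hxe] at hlt ⊢
        exact (sig_i n s i b hi1 hi2 hs u v).1 hlt
      · obtain ⟨a, ha, rfl⟩ := mem_image.mp hx'
        obtain ⟨u, v⟩ := hbound a ha
        rw [hye] at hlt ⊢
        exact (sig_i n s i a hi1 hi2 hs u v).2 hlt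
      · obtain ⟨a, ha, rfl⟩ := mem_image.mp hx'
        obtain ⟨b, hb, rfl⟩ := mem_image.mp hy'
        exact sig_pair n s i a b hi1 hi2 (hbound' a ha) (hbound' b hb)
          (fun h => hTst a ha b hb h) (fun h => hTst b hb a ha h) hlt
    · exact mem_insert_self i _
open scoped Classical in
lemma stepTwo (n k s m : ℕ) (hk : 0 < k) (hs : 0 < s) (hsn : s ≤ n)
    (hmn : m + k * (s - 1) + 1 = n) :
    (((Finset.Icc s (n - s)).powerset).filter
        (fun T => T.card = k - 1 ∧ IsStable n s T)).card =
    ((Finset.Icc 1 m).powersetCard (k - 1)).card := by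
  apply Finset.card_bij'
    (fun T _ => T.image (fun x => x - (s - 1) * ((T.filter (· < x)).card + 1)))
    (fun B _ => B.image (fun y => y + (s - 1) * ((B.filter (· < y)).card + 1)))
  · -- left inverse : bwd (fwd T) = T
    intro T hT
    simp only [mem_filter, mem_powerset] at hT
    obtain ⟨hTsub, hTcard, hTst⟩ := hT
    have hgap : ∀ a ∈ T, ∀ b ∈ T, a < b → s ≤ b - a :=
      fun a ha b hb h => (hTst a ha b hb h).1
    have hlb : ∀ a ∈ T, s ≤ a := fun a ha => (mem_Icc.mp (hTsub ha)).1
    have hfmono := fMono s hs T hgap hlb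
    rw [Finset.image_image]
    rw [Finset.image_congr (g := id), Finset.image_id]
    intro x hx
    simp only [Finset.mem_coe] at hx
    simp only [Function.comp_apply, id_eq]
    rw [monoFilterCard T _ hfmono x hx]
    have h1 := fLower s hs T hgap hlb x hx
    omega
  · -- right inverse : fwd (bwd B) = B
    intro B hB
    rw [mem_powersetCard] at hB
    obtain ⟨hBsub, hBcard⟩ := hB
    have hgmono := gMono s B
    rw [Finset.image_image]
    rw [Finset.image_congr (g := id), Finset.image_id]
    intro y hy
    simp only [Finset.mem_coe] at hy
    simp only [Function.comp_apply, id_eq]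
    rw [monoFilterCard B _ hgmono y hy]
    omega
  · -- forward membership
    intro T hT
    simp only [mem_filter, mem_powerset] at hT
    obtain ⟨hTsub, hTcard, hTst⟩ := hT
    have hgap : ∀ a ∈ T, ∀ b ∈ T, a < b → s ≤ b - a :=
      fun a ha b hb h => (hTst a ha b hb h).1
    have hlb : ∀ a ∈ T, s ≤ a := fun a ha => (mem_Icc.mp (hTsub ha)).1
    have hub : ∀ a ∈ T, a + s ≤ n := by
      intro a ha; have := (mem_Icc.mp (hTsub ha)).2; omega
    rw [mem_powersetCard]
    constructor
    · intro w hw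
      obtain ⟨x, hx, rfl⟩ := mem_image.mp hw
      rw [mem_Icc]
      constructor
      · have := fLower s hs T hgap hlb x hx; omega
      · exact fUpper n k s m hk hs hmn T hgap hub hTcard x hx
    · rw [card_image_of_injOn (monoInjOn T _ (fMono s hs T hgap hlb)), hTcard]
  · -- backward membership
    intro B hB
    rw [mem_powersetCard] at hB
    obtain ⟨hBsub, hBcard⟩ := hB
    simp only [mem_filter, mem_powerset]
    refine ⟨?_, ?_, ?_⟩
    · intro w hw
      obtain ⟨y, hy, rfl⟩ := mem_image.mp hw
      exact mem_Icc.mpr (gBounds n k s m hk hs hmn B hBsub hBcard y hy)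
    · rw [card_image_of_injOn (monoInjOn B _ (gMono s B)), hBcard]
    · intro u hu v hv hlt
      obtain ⟨y, hy, rfl⟩ := mem_image.mp hu
      obtain ⟨y', hy', rfl⟩ := mem_image.mp hv
      have hyy' : y < y' := by
        rcases lt_trichotomy y y' with h | h | h
        · exact h
        · subst h; omega
        · have := gMono s B y' hy' y hy h; omega
      have hgg := gGap s hs B hy hy' hyy'
      have hb1 := gBounds n k s m hk hs hmn B hBsub hBcard y hy
      have hb2 := gBounds n k s m hk hs hmn B hBsub hBcard y' hy'
      omega

open scoped Classical in
theorem count_stable_subsets_containing (n k s : ℕ) (hn : 0 < n) (hk : 0 < k)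
    (hs : 0 < s) (hnk : s * k ≤ n) (i : ℕ) (hi : i ∈ Finset.Icc 1 n) :
    Nat.card {A : Finset ℕ //
        A ⊆ Finset.Icc 1 n ∧ A.card = k ∧ IsStable n s A ∧ i ∈ A} =
      (n - k * (s - 1) - 1).choose (k - 1) := by
  rw [Finset.mem_Icc] at hi
  obtain ⟨hi1, hi2⟩ := hi
  have hsn : s ≤ n := le_trans (Nat.le_mul_of_pos_right s hk) hnk
  have hsk : s * k = k * (s - 1) + k := by
    obtain ⟨t, rfl⟩ : ∃ t, s = t + 1 := ⟨s - 1, by omega⟩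
    simp only [Nat.add_sub_cancel]; ring
  have hmn : (n - k * (s - 1) - 1) + k * (s - 1) + 1 = n := by omega
  have hstep : Nat.card {A : Finset ℕ //
      A ⊆ Finset.Icc 1 n ∧ A.card = k ∧ IsStable n s A ∧ i ∈ A} =
      (((Finset.Icc 1 n).powerset).filter
        (fun A => A.card = k ∧ IsStable n s A ∧ i ∈ A)).card := by
    rw [Nat.card_congr (Equiv.subtypeEquivRight (q := fun A =>
      A ∈ ((Finset.Icc 1 n).powerset).filter
        (fun A => A.card = k ∧ IsStable n s A ∧ i ∈ A)) (fun A => by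
      simp only [mem_filter, mem_powerset]))]
    exact Nat.card_eq_finsetCard _
  rw [hstep, stepOne n k s i hk hs hsn hi1 hi2,
    stepTwo n k s (n - k * (s - 1) - 1) hk hs hsn hmn, card_powersetCard,
    Nat.card_Icc, Nat.add_sub_cancel]
end

section
/- Let n, k be positive integers and s a positive integer with n ≥ sk. The number of s-stable k-subsets of [n] equals (n/k)·C(n - k(s-1) - 1, k-1). -/
open Finset

instance (n s : ℕ) : DecidablePred (IsStable n s) := fun A =>
  decidable_of_iff (∀ i ∈ A, ∀ j ∈ A, i < j → s ≤ j - i ∧ j - i ≤ n - s) Iff.rfl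

/-- The finset of `s`-stable `k`-subsets of `[n]`. -/
def stableSets (n s k : ℕ) : Finset (Finset ℕ) :=
  ((Finset.Icc 1 n).powersetCard k).filter (fun A => IsStable n s A)

lemma mem_stableSets {n s k : ℕ} {A : Finset ℕ} :
    A ∈ stableSets n s k ↔ A ⊆ Finset.Icc 1 n ∧ A.card = k ∧ IsStable n s A := by
  simp only [stableSets, mem_filter, mem_powersetCard]
  tauto

/-- Compositions of `n` into `k` parts, each at least `s`. -/
def compSet (n k s : ℕ) : Finset (Fin k → ℕ) :=
  (Fintype.piFinset fun _ => Finset.Icc s n).filter fun h => ∑ i, h i = n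

lemma mem_compSet {n k s : ℕ} {h : Fin k → ℕ} :
    h ∈ compSet n k s ↔ (∀ i, s ≤ h i) ∧ ∑ i, h i = n := by
  simp only [compSet, mem_filter, Fintype.mem_piFinset, mem_Icc]
  constructor
  · rintro ⟨h1, h2⟩; exact ⟨fun i => (h1 i).1, h2⟩
  · rintro ⟨h1, h2⟩
    refine ⟨fun i => ⟨h1 i, ?_⟩, h2⟩
    calc h i ≤ ∑ j, h j := Finset.single_le_sum (fun _ _ => Nat.zero_le _) (mem_univ i)
    _ = n := h2

/-- partial sums of a tuple -/
def psum {k : ℕ} (h : Fin k → ℕ) (i : Fin k) : ℕ :=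
  ∑ j ∈ Finset.univ.filter (fun j : Fin k => (j : ℕ) < (i : ℕ)), h j

lemma psum_zero {k : ℕ} (h : Fin k → ℕ) (i : Fin k) (hi : (i : ℕ) = 0) :
    psum h i = 0 := by
  unfold psum
  rw [show Finset.univ.filter (fun j : Fin k => (j : ℕ) < (i : ℕ)) = ∅ from
    filter_eq_empty_iff.mpr (fun j _ => by omega), sum_empty]

lemma psum_succ {k : ℕ} (h : Fin k → ℕ) (i i' : Fin k) (hii : (i' : ℕ) = (i : ℕ) + 1) :
    psum h i' = psum h i + h i := by
  unfold psum
  rw [show Finset.univ.filter (fun j : Fin k => (j : ℕ) < (i' : ℕ))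
      = insert i (Finset.univ.filter (fun j : Fin k => (j : ℕ) < (i : ℕ))) by
    ext j
    simp only [mem_filter, mem_univ, true_and, mem_insert, Fin.ext_iff]
    omega]
  rw [Finset.sum_insert (by simp)]
  ring

lemma psum_mono {k : ℕ} (h : Fin k → ℕ) {i i' : Fin k} (hii : (i : ℕ) ≤ (i' : ℕ)) :
    psum h i ≤ psum h i' := by
  apply Finset.sum_le_sum_of_subset
  intro j
  simp only [mem_filter, mem_univ, true_and]
  omega

lemma psum_add_le {k : ℕ} (h : Fin k → ℕ) {i i' : Fin k} (hii : (i : ℕ) < (i' : ℕ)) :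
    psum h i + h i ≤ psum h i' := by
  have : psum h i + h i
      = ∑ j ∈ insert i (Finset.univ.filter (fun j : Fin k => (j : ℕ) < (i : ℕ))), h j := by
    rw [Finset.sum_insert (by simp), psum, add_comm]
  rw [this]
  apply Finset.sum_le_sum_of_subset
  intro j
  simp only [mem_insert, mem_filter, mem_univ, true_and, Fin.ext_iff]
  omega

lemma psum_total {k : ℕ} (h : Fin k → ℕ) (hk : 0 < k) :
    psum h ⟨k - 1, Nat.sub_lt hk Nat.one_pos⟩ + h ⟨k - 1, Nat.sub_lt hk Nat.one_pos⟩
      = ∑ j, h j := by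
  have : (Finset.univ : Finset (Fin k))
      = insert (⟨k - 1, Nat.sub_lt hk Nat.one_pos⟩ : Fin k)
        (Finset.univ.filter (fun j : Fin k => (j : ℕ) < k - 1)) := by
    ext j
    simp only [mem_univ, mem_insert, mem_filter, true_and, true_iff, Fin.ext_iff]
    have := j.isLt
    omega
  conv_rhs => rw [this]
  rw [Finset.sum_insert (by simp), psum]
  ring


/-- Forward map: from (gap tuple, base point) to the stable set of partial sums. -/
def Fmap (k : ℕ) (p : Σ _ : Fin k → ℕ, ℕ) : Finset ℕ :=
  Finset.image (fun i : Fin k => p.2 + psum p.1 i) Finset.univ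

/-- Backward map: from a k-set to (gap tuple, base point). -/
def Gmap (n k : ℕ) (hk : 0 < k) (A : Finset ℕ) (hA : A.card = k) : Σ _ : Fin k → ℕ, ℕ :=
  ⟨fun j => if hj : (j : ℕ) + 1 < k
      then A.orderEmbOfFin hA ⟨(j : ℕ) + 1, hj⟩ - A.orderEmbOfFin hA j
      else n - (A.orderEmbOfFin hA ⟨k - 1, Nat.sub_lt hk Nat.one_pos⟩
        - A.orderEmbOfFin hA ⟨0, hk⟩),
   A.orderEmbOfFin hA ⟨0, hk⟩⟩

lemma v_strictMono {k s : ℕ} (h : Fin k → ℕ) (hh : ∀ i, s ≤ h i) (hs : 0 < s) (a : ℕ) :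
    StrictMono (fun i : Fin k => a + psum h i) := by
  intro i i' hii
  have h1 := psum_add_le h (show (i : ℕ) < (i' : ℕ) from hii)
  have h2 := hh i
  simp only
  omega

lemma Gmap_telescope {n k : ℕ} (hk : 0 < k) (A : Finset ℕ) (hA : A.card = k) :
    ∀ t, ∀ ht : t < k,
      A.orderEmbOfFin hA ⟨0, hk⟩ + psum (Gmap n k hk A hA).1 ⟨t, ht⟩
        = A.orderEmbOfFin hA ⟨t, ht⟩ := by
  intro t
  induction t with
  | zero => intro ht; rw [psum_zero _ _ rfl, Nat.add_zero]
  | succ t ih =>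
    intro ht
    have ht' : t < k := Nat.lt_of_succ_lt ht
    have hstep : psum (Gmap n k hk A hA).1 ⟨t + 1, ht⟩
        = psum (Gmap n k hk A hA).1 ⟨t, ht'⟩ + (Gmap n k hk A hA).1 ⟨t, ht'⟩ :=
      psum_succ _ _ _ rfl
    have hval : (Gmap n k hk A hA).1 ⟨t, ht'⟩
        = A.orderEmbOfFin hA ⟨t + 1, ht⟩ - A.orderEmbOfFin hA ⟨t, ht'⟩ := by
      simp only [Gmap]
      rw [dif_pos ht]
    have hmono : A.orderEmbOfFin hA ⟨t, ht'⟩ ≤ A.orderEmbOfFin hA ⟨t + 1, ht⟩ :=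
      le_of_lt ((A.orderEmbOfFin hA).strictMono (show (⟨t, ht'⟩ : Fin k) < ⟨t + 1, ht⟩ by
        simp [Fin.lt_def]))
    have := ih ht'
    omega

lemma Gmap_mem {n k s : ℕ} (hk : 0 < k) (hs : 0 < s) (hnk : s * k ≤ n)
    {A : Finset ℕ} (hA : A ∈ stableSets n s k) (hC : A.card = k) :
    Gmap n k hk A hC ∈ (compSet n k s).sigma
      (fun h => Finset.Icc 1 (h ⟨k - 1, Nat.sub_lt hk Nat.one_pos⟩)) := by
  obtain ⟨hsub, hcard, hst⟩ := mem_stableSets.mp hA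
  set e := A.orderEmbOfFin hC with he
  set lk : Fin k := ⟨k - 1, Nat.sub_lt hk Nat.one_pos⟩ with hlk
  have hsn : s ≤ n := le_trans (Nat.le_mul_of_pos_right s hk) hnk
  have hbounds : ∀ i : Fin k, 1 ≤ e i ∧ e i ≤ n := by
    intro i
    have := hsub (Finset.orderEmbOfFin_mem A hC i)
    rwa [mem_Icc] at this
  have h0lk : e ⟨0, hk⟩ ≤ e lk := by
    apply (A.orderEmbOfFin hC).monotone
    simp [Fin.le_def, hlk]
  have hstab : ∀ i i' : Fin k, i < i' → s ≤ e i' - e i ∧ e i' - e i ≤ n - s := by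
    intro i i' hii
    exact hst _ (Finset.orderEmbOfFin_mem A hC i) _ (Finset.orderEmbOfFin_mem A hC i')
      ((A.orderEmbOfFin hC).strictMono hii)
  have hlast : (Gmap n k hk A hC).1 lk = n - (e lk - e ⟨0, hk⟩) := by
    simp only [Gmap, hlk]
    rw [dif_neg (by omega)]
  have hpsumlk : e ⟨0, hk⟩ + psum (Gmap n k hk A hC).1 lk = e lk :=
    Gmap_telescope hk A hC (k - 1) _
  have hsum : ∑ j, (Gmap n k hk A hC).1 j = n := by
    rw [← psum_total _ hk, ← hlk, hlast]
    have h1 := (hbounds lk).2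
    have h2 := (hbounds ⟨0, hk⟩).1
    omega
  have hge : ∀ j : Fin k, s ≤ (Gmap n k hk A hC).1 j := by
    intro j
    by_cases hj : (j : ℕ) + 1 < k
    · have : (Gmap n k hk A hC).1 j = e ⟨(j : ℕ) + 1, hj⟩ - e j := by
        simp only [Gmap]; rw [dif_pos hj]
      rw [this]
      exact (hstab j ⟨(j : ℕ) + 1, hj⟩ (by simp [Fin.lt_def])).1
    · have hjlk : j = lk := Fin.ext (by have := j.isLt; simp [hlk]; omega)
      rw [hjlk, hlast]
      rcases Nat.lt_or_ge 1 k with h2 | h1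
      · have h0lt : (⟨0, hk⟩ : Fin k) < lk := by simp [Fin.lt_def, hlk]; omega
        have := (hstab _ _ h0lt).2
        omega
      · have hk1 : k = 1 := by omega
        have : e lk = e ⟨0, hk⟩ := by congr 1; exact Fin.ext (by simp [hlk, hk1])
        rw [this]
        have : s * k = s := by rw [hk1, mul_one]
        omega
  rw [Finset.mem_sigma]
  constructor
  · exact mem_compSet.mpr ⟨hge, hsum⟩
  · rw [mem_Icc]
    refine ⟨(hbounds ⟨0, hk⟩).1, ?_⟩
    show e ⟨0, hk⟩ ≤ _
    rw [hlast]
    have := (hbounds lk).2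
    omega

lemma Fmap_mem {n k s : ℕ} (hk : 0 < k) (hs : 0 < s) (hnk : s * k ≤ n)
    {p : Σ _ : Fin k → ℕ, ℕ}
    (hp : p ∈ (compSet n k s).sigma
      (fun h => Finset.Icc 1 (h ⟨k - 1, Nat.sub_lt hk Nat.one_pos⟩))) :
    Fmap k p ∈ stableSets n s k := by
  obtain ⟨h, a⟩ := p
  rw [Finset.mem_sigma, mem_Icc] at hp
  dsimp only at hp
  obtain ⟨hcomp, ha1, ha2⟩ := hp
  obtain ⟨hge, hsum⟩ := mem_compSet.mp hcomp
  set lk : Fin k := ⟨k - 1, Nat.sub_lt hk Nat.one_pos⟩ with hlk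
  have hmono : StrictMono (fun i : Fin k => a + psum h i) := v_strictMono h hge hs a
  have htot : psum h lk + h lk = n := by rw [psum_total h hk, hsum]
  have hvle : ∀ i : Fin k, a + psum h i ≤ n := by
    intro i
    have hple : psum h i ≤ psum h lk := psum_mono h (by have := i.isLt; simp [hlk]; omega)
    omega
  rw [mem_stableSets]
  refine ⟨?_, ?_, ?_⟩
  · intro x hx
    simp only [Fmap, mem_image, mem_univ, true_and] at hx
    obtain ⟨i, rfl⟩ := hx
    rw [mem_Icc]
    exact ⟨by omega, hvle i⟩
  · rw [Fmap, Finset.card_image_of_injective _ hmono.injective, card_univ, Fintype.card_fin]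
  · intro x hx y hy hxy
    simp only [Fmap, mem_image, mem_univ, true_and] at hx hy
    obtain ⟨i, rfl⟩ := hx
    obtain ⟨i', rfl⟩ := hy
    have hii : i < i' := by
      by_contra hcon
      exact absurd (hmono.le_iff_le.mpr (not_lt.mp hcon)) (not_le.mpr hxy)
    have h1 : psum h i + h i ≤ psum h i' := psum_add_le h hii
    have h2 : s ≤ h i := hge i
    have h3 : psum h i' ≤ psum h lk := psum_mono h (by have := i'.isLt; simp [hlk]; omega)
    have h4 : s ≤ h lk := hge lk
    constructor <;> omega

section Main

variable {n k s : ℕ}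

lemma card_compSet (hk : 0 < k) (hs : 0 < s) (hnk : s * k ≤ n) :
    (compSet n k s).card = (n - k * (s - 1) - 1).choose (k - 1) := by
  have hks : k ≤ s * k := Nat.le_mul_of_pos_left k hs
  have hmul : k * (s - 1) = s * k - k := by
    cases s with
    | zero => omega
    | succ s' => rw [Nat.succ_sub_one, Nat.succ_mul]; ring_nf; omega
  have e1 : {h // h ∈ compSet n k s} ≃ {P : Fin k → ℕ // ∑ i, P i = n - s * k} := by
    refine
      { toFun := fun h => ⟨fun i => h.1 i - s, ?_⟩
        invFun := fun P => ⟨fun i => P.1 i + s, ?_⟩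
        left_inv := ?_, right_inv := ?_ }
    · obtain ⟨h, hh⟩ := h
      rw [mem_compSet] at hh
      show ∑ i, (h i - s) = n - s * k
      have key : ∑ i, (h i - s) + s * k = n := by
        have e : ∑ i, ((h i - s) + s) = ∑ i, h i :=
          Finset.sum_congr rfl (fun i _ => by have := hh.1 i; omega)
        rw [Finset.sum_add_distrib, Finset.sum_const, card_univ, Fintype.card_fin,
          smul_eq_mul, hh.2, mul_comm] at e
        omega
      omega
    · obtain ⟨P, hP⟩ := P
      rw [mem_compSet]
      refine ⟨fun i => by omega, ?_⟩
      show ∑ i, (P i + s) = n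
      rw [Finset.sum_add_distrib, Finset.sum_const, card_univ, Fintype.card_fin,
        smul_eq_mul, hP]
      have hc : k * s = s * k := mul_comm k s
      omega
    · rintro ⟨h, hh⟩
      rw [mem_compSet] at hh
      ext i
      have := hh.1 i
      simp only
      omega
    · rintro ⟨P, hP⟩
      ext i
      simp only
      omega
  have : Nat.card {h // h ∈ compSet n k s} = Nat.card (Sym (Fin k) (n - s * k)) := by
    rw [Nat.card_congr e1, Nat.card_congr (Sym.equivNatSumOfFintype (Fin k) (n - s * k)).symm]
  rw [Nat.card_eq_finsetCard] at this
  rw [this, Nat.card_eq_fintype_card, Sym.card_sym_eq_choose, Fintype.card_fin]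
  have h1 : k + (n - s * k) - 1 = n - k * (s - 1) - 1 := by omega
  have h2 : n - s * k = (n - k * (s - 1) - 1) - (k - 1) := by omega
  rw [h1, h2, Nat.choose_symm (by omega)]

lemma sum_coord_compSet (j j' : Fin k) :
    ∑ h ∈ compSet n k s, h j = ∑ h ∈ compSet n k s, h j' := by
  refine Finset.sum_nbij' (i := fun h => h ∘ Equiv.swap j j')
    (j := fun h => h ∘ Equiv.swap j j') ?_ ?_ ?_ ?_ ?_
  · intro h hh
    rw [mem_compSet] at hh ⊢
    refine ⟨fun i => hh.1 _, ?_⟩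
    show ∑ i, h (Equiv.swap j j' i) = n
    rw [Fintype.sum_equiv (Equiv.swap j j') _ h (fun i => rfl)]
    exact hh.2
  · intro h hh
    rw [mem_compSet] at hh ⊢
    refine ⟨fun i => hh.1 _, ?_⟩
    show ∑ i, h (Equiv.swap j j' i) = n
    rw [Fintype.sum_equiv (Equiv.swap j j') _ h (fun i => rfl)]
    exact hh.2
  · intro h _; funext i; simp [Equiv.swap_apply_self]
  · intro h _; funext i; simp [Equiv.swap_apply_self]
  · intro h _; simp [Equiv.swap_apply_right]

lemma Fmap_Gmap (hk : 0 < k) (A : Finset ℕ) (hA : A.card = k) :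
    Fmap k (Gmap n k hk A hA) = A := by
  have hpt : ∀ i : Fin k,
      (Gmap n k hk A hA).2 + psum (Gmap n k hk A hA).1 i = A.orderEmbOfFin hA i :=
    fun i => Gmap_telescope hk A hA i i.isLt
  have h1 : Fmap k (Gmap n k hk A hA) = Finset.image (⇑(A.orderEmbOfFin hA)) Finset.univ :=
    Finset.image_congr (fun i _ => hpt i)
  rw [h1]
  apply Finset.eq_of_subset_of_card_le
  · intro x hx
    simp only [mem_image, mem_univ, true_and] at hx
    obtain ⟨i, rfl⟩ := hx
    exact Finset.orderEmbOfFin_mem A hA i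
  · rw [Finset.card_image_of_injective _ (A.orderEmbOfFin hA).strictMono.injective,
      card_univ, Fintype.card_fin, hA]

lemma Gmap_Fmap (hk : 0 < k) (hs : 0 < s) (p : Σ _ : Fin k → ℕ, ℕ)
    (hp : p ∈ (compSet n k s).sigma
      (fun h => Finset.Icc 1 (h ⟨k - 1, Nat.sub_lt hk Nat.one_pos⟩)))
    (hc : (Fmap k p).card = k) :
    Gmap n k hk (Fmap k p) hc = p := by
  obtain ⟨h, a⟩ := p
  rw [Finset.mem_sigma, mem_Icc] at hp
  dsimp only at hp
  obtain ⟨hcomp, ha1, ha2⟩ := hp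
  obtain ⟨hge, hsum⟩ := mem_compSet.mp hcomp
  set lk : Fin k := ⟨k - 1, Nat.sub_lt hk Nat.one_pos⟩ with hlk
  have hmono : StrictMono (fun i : Fin k => a + psum h i) := v_strictMono h hge hs a
  have hveq : (fun i : Fin k => a + psum h i) = ⇑((Fmap k ⟨h, a⟩).orderEmbOfFin hc) :=
    Finset.orderEmbOfFin_unique hc
      (fun i => Finset.mem_image_of_mem _ (mem_univ i)) hmono
  have he : ∀ i : Fin k, (Fmap k ⟨h, a⟩).orderEmbOfFin hc i = a + psum h i :=
    fun i => by rw [← hveq]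
  have htot : psum h lk + h lk = n := by rw [psum_total h hk, hsum]
  have h2 : (Gmap n k hk (Fmap k ⟨h, a⟩) hc).2 = a := by
    show (Fmap k ⟨h, a⟩).orderEmbOfFin hc ⟨0, hk⟩ = a
    rw [he, psum_zero _ _ rfl]
    omega
  have h1 : (Gmap n k hk (Fmap k ⟨h, a⟩) hc).1 = h := by
    funext j
    by_cases hj : (j : ℕ) + 1 < k
    · show (if hj : (j : ℕ) + 1 < k then _ else _) = h j
      rw [dif_pos hj, he, he, psum_succ h j ⟨(j : ℕ) + 1, hj⟩ rfl]
      omega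
    · have hjlk : j = lk := Fin.ext (by have := j.isLt; simp only [hlk]; omega)
      show (if hj : (j : ℕ) + 1 < k then _ else _) = h j
      rw [dif_neg hj]
      show n - ((Fmap k ⟨h, a⟩).orderEmbOfFin hc ⟨k - 1, Nat.sub_lt hk Nat.one_pos⟩
          - (Fmap k ⟨h, a⟩).orderEmbOfFin hc ⟨0, hk⟩) = h j
      rw [he, he, psum_zero h ⟨0, hk⟩ rfl, hjlk, ← hlk]
      omega
  exact Sigma.ext h1 (heq_of_eq h2)

lemma card_stableSets (hn : 0 < n) (hk : 0 < k) (hs : 0 < s) (hnk : s * k ≤ n) :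
    (stableSets n s k).card
      = ∑ h ∈ compSet n k s, h ⟨k - 1, Nat.sub_lt hk Nat.one_pos⟩ := by
  have hsig : ((compSet n k s).sigma
      (fun h => Finset.Icc 1 (h ⟨k - 1, Nat.sub_lt hk Nat.one_pos⟩))).card
      = ∑ h ∈ compSet n k s, h ⟨k - 1, Nat.sub_lt hk Nat.one_pos⟩ := by
    rw [Finset.card_sigma]
    exact Finset.sum_congr rfl (fun h _ => by rw [Nat.card_Icc]; omega)
  rw [← hsig]
  exact Finset.card_bij'
    (fun A hA => Gmap n k hk A (mem_stableSets.mp hA).2.1)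
    (fun p _ => Fmap k p)
    (fun A hA => Gmap_mem hk hs hnk hA _)
    (fun p hp => Fmap_mem hk hs hnk hp)
    (fun A hA => Fmap_Gmap hk A _)
    (fun p hp => Gmap_Fmap hk hs p hp _)

theorem count_stable_subsets (n k s : ℕ) (hn : 0 < n) (hk : 0 < k)
    (hs : 0 < s) (hnk : s * k ≤ n) :
    (Nat.card {A : Finset ℕ //
        A ⊆ Finset.Icc 1 n ∧ A.card = k ∧ IsStable n s A} : ℚ) =
      (n : ℚ) / (k : ℚ) * ((n - k * (s - 1) - 1).choose (k - 1) : ℚ) := by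
  have hcardeq : Nat.card {A : Finset ℕ //
      A ⊆ Finset.Icc 1 n ∧ A.card = k ∧ IsStable n s A} = (stableSets n s k).card := by
    rw [Nat.card_congr (Equiv.subtypeEquivRight (q := (· ∈ stableSets n s k))
      (fun A => mem_stableSets.symm)), Nat.card_eq_finsetCard]
  set lk : Fin k := ⟨k - 1, Nat.sub_lt hk Nat.one_pos⟩ with hlk
  have key : k * (stableSets n s k).card = n * (n - k * (s - 1) - 1).choose (k - 1) := by
    have h1 : ∑ h ∈ compSet n k s, ∑ j : Fin k, h j = n * (compSet n k s).card := by
      rw [Finset.sum_congr rfl (fun h hh => (mem_compSet.mp hh).2), Finset.sum_const,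
        smul_eq_mul, mul_comm]
    have h2 : ∑ h ∈ compSet n k s, ∑ j : Fin k, h j
        = k * ∑ h ∈ compSet n k s, h lk := by
      rw [Finset.sum_comm]
      rw [Finset.sum_congr rfl (fun j _ => sum_coord_compSet j lk), Finset.sum_const,
        card_univ, Fintype.card_fin, smul_eq_mul]
    rw [card_stableSets hn hk hs hnk, ← h2, h1, card_compSet hk hs hnk]
  rw [hcardeq]
  have hk0 : (k : ℚ) ≠ 0 := Nat.cast_ne_zero.mpr hk.ne'
  rw [div_mul_eq_mul_div, eq_div_iff hk0]
  have := congrArg (Nat.cast : ℕ → ℚ) key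
  push_cast at this
  linarith

end Main
end

section
/- An independent set F in a graph G is a free independent set (i.e., extends to at least two distinct maximal independent sets) if and only if there exists an edge uv of G such that (N(u) ∪ N(v)) ∩ F = ∅. -/
/-- `S` is an independent set of `G`. -/
def IsIndep {V : Type*} (G : SimpleGraph V) (S : Set V) : Prop :=
  ∀ ⦃u⦄, u ∈ S → ∀ ⦃v⦄, v ∈ S → ¬ G.Adj u v

theorem freeIndep_iff_edge {V : Type*} [Fintype V] (G : SimpleGraph V)
    (F : Set V) (hF : IsIndep G F) :
    (∃ M₁ M₂ : Set V, M₁ ≠ M₂ ∧ F ⊆ M₁ ∧ F ⊆ M₂ ∧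
        Maximal (IsIndep G) M₁ ∧ Maximal (IsIndep G) M₂) ↔
      ∃ u v : V, G.Adj u v ∧ (G.neighborSet u ∪ G.neighborSet v) ∩ F = ∅ := by
  constructor
  · rintro ⟨M₁, M₂, hne, hF1, hF2, hM₁, hM₂⟩
    -- pick x ∈ M₁ \ M₂ (wlog)
    have key : ∀ (A B : Set V), F ⊆ A → F ⊆ B → Maximal (IsIndep G) A →
        Maximal (IsIndep G) B → ∀ x, x ∈ A → x ∉ B →
        ∃ u v : V, G.Adj u v ∧ (G.neighborSet u ∪ G.neighborSet v) ∩ F = ∅ := by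
      intro A B hFA hFB hA hB x hxA hxB
      -- B ∪ {x} is not independent
      have hnotind : ¬ IsIndep G (insert x B) := by
        intro h
        exact hxB (hB.2 h (Set.subset_insert _ _) (Set.mem_insert _ _))
      -- so x is adjacent to some y ∈ B
      have : ∃ y ∈ B, G.Adj x y := by
        by_contra hcon
        push_neg at hcon
        apply hnotind
        intro a ha b hb hab
        rcases ha with rfl | ha
        · rcases hb with rfl | hb
          · exact G.loopless.irrefl _ hab
          · exact hcon _ hb hab
        · rcases hb with rfl | hb
          · exact hcon _ ha (G.adj_symm hab)
          · exact hB.1 ha hb hab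
      obtain ⟨y, hyB, hxy⟩ := this
      refine ⟨x, y, hxy, ?_⟩
      ext z
      simp only [Set.mem_inter_iff, Set.mem_union, SimpleGraph.mem_neighborSet,
        Set.mem_empty_iff_false, iff_false, not_and]
      rintro (hz | hz) hzF
      · exact hA.1 hxA (hFA hzF) hz
      · exact hB.1 hyB (hFB hzF) hz
    rcases Set.not_subset.mp (fun h => hne (le_antisymm h
        (hM₁.2 hM₂.1 h) : M₁ = M₂)) with ⟨x, hx1, hx2⟩
    exact key M₁ M₂ hF1 hF2 hM₁ hM₂ x hx1 hx2
  · rintro ⟨u, v, huv, hdisj⟩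
    have hdisj' : ∀ z ∈ F, ¬ G.Adj u z ∧ ¬ G.Adj v z := by
      intro z hz
      constructor <;> intro h <;>
        exact absurd (Set.eq_empty_iff_forall_notMem.mp hdisj z
          ⟨by simp [SimpleGraph.mem_neighborSet, h], hz⟩) (fun h => h)
    have hu : IsIndep G (insert u F) := by
      intro a ha b hb hab
      rcases ha with rfl | ha
      · rcases hb with rfl | hb
        · exact G.loopless.irrefl _ hab
        · exact (hdisj' _ hb).1 hab
      · rcases hb with rfl | hb
        · exact (hdisj' _ ha).1 (G.adj_symm hab)
        · exact hF ha hb hab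
    have hv : IsIndep G (insert v F) := by
      intro a ha b hb hab
      rcases ha with rfl | ha
      · rcases hb with rfl | hb
        · exact G.loopless.irrefl _ hab
        · exact (hdisj' _ hb).2 hab
      · rcases hb with rfl | hb
        · exact (hdisj' _ ha).2 (G.adj_symm hab)
        · exact hF ha hb hab
    obtain ⟨M₁, hM₁le, hM₁⟩ := Finite.exists_le_maximal hu
    obtain ⟨M₂, hM₂le, hM₂⟩ := Finite.exists_le_maximal hv
    refine ⟨M₁, M₂, ?_, ?_, ?_, hM₁, hM₂⟩
    · intro h
      have huM : u ∈ M₂ := h ▸ hM₁le (Set.mem_insert _ _)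
      have hvM : v ∈ M₂ := hM₂le (Set.mem_insert _ _)
      exact hM₂.1 huM hvM huv
    · exact (Set.subset_insert _ _).trans hM₁le
    · exact (Set.subset_insert _ _).trans hM₂le
end

section
/- For n > 2k, every free independent set in the Kneser graph KG(n,k) has size at most C(n-1, k-1) - C(n-k-1, k-1). -/
open Finset

namespace HMaux

variable {α : Type*} [DecidableEq α]

/-- Master bijection: `k`-subsets of `S` containing `j` with property `p` of the rest
correspond to `(k-1)`-subsets of `S.erase j` with property `p`. -/
lemma card_filter_erase (S : Finset α) {j : α} (hj : j ∈ S) {k : ℕ} (hk : 0 < k)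
    (p : Finset α → Prop) [DecidablePred p] :
    ((powersetCard k S).filter fun A => j ∈ A ∧ p (A.erase j)).card
      = ((powersetCard (k-1) (S.erase j)).filter p).card := by
  apply card_nbij (fun A => A.erase j)
  · simp only [Set.MapsTo, mem_coe]; intro A hA
    simp only [mem_filter, mem_powersetCard] at hA ⊢
    obtain ⟨⟨hAS, hAcard⟩, hjA, hp⟩ := hA
    exact ⟨⟨erase_subset_erase _ hAS, by rw [card_erase_of_mem hjA, hAcard]⟩, hp⟩
  · intro A hA B hB h
    simp only [coe_filter, Set.mem_setOf_eq, mem_powersetCard] at hA hB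
    have h' : A.erase j = B.erase j := h
    rw [← insert_erase hA.2.1, ← insert_erase hB.2.1, h']
  · intro P hP
    simp only [coe_filter, Set.mem_setOf_eq, mem_powersetCard] at hP
    obtain ⟨⟨hPS, hPcard⟩, hp⟩ := hP
    have hjP : j ∉ P := fun h => (mem_erase.1 (hPS h)).1 rfl
    refine ⟨insert j P, ?_, erase_insert hjP⟩
    simp only [coe_filter, Set.mem_setOf_eq, mem_powersetCard]
    refine ⟨⟨insert_subset hj (hPS.trans (erase_subset _ _)), ?_⟩,
      mem_insert_self _ _, by rw [erase_insert hjP]; exact hp⟩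
    rw [card_insert_of_notMem hjP, hPcard]; omega

lemma card_filter_mem (S : Finset α) {j : α} (hj : j ∈ S) {k : ℕ} (hk : 0 < k) :
    ((powersetCard k S).filter fun A => j ∈ A).card = (S.card - 1).choose (k-1) := by
  have h := card_filter_erase S hj hk (fun _ => True)
  simp only [and_true, filter_true_of_mem (fun _ _ => trivial)] at h
  rw [h, card_powersetCard, card_erase_of_mem hj]

lemma card_filter_mem_mem (S : Finset α) {i j : α} (hi : i ∈ S) (hj : j ∈ S) (hij : i ≠ j)
    {k : ℕ} (hk : 2 ≤ k) :
    ((powersetCard k S).filter fun A => i ∈ A ∧ j ∈ A).card = (S.card - 2).choose (k-2) := by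
  have h := card_filter_erase S hj (by omega : 0 < k) (fun B => i ∈ B)
  have e1 : ((powersetCard k S).filter fun A => j ∈ A ∧ i ∈ A.erase j)
      = (powersetCard k S).filter fun A => i ∈ A ∧ j ∈ A := by
    apply filter_congr; intro A _
    simp only [mem_erase]
    constructor
    · rintro ⟨h1, h2, h3⟩; exact ⟨h3, h1⟩
    · rintro ⟨h1, h2⟩; exact ⟨h2, hij, h1⟩
  rw [e1] at h
  rw [h, card_filter_mem (S.erase j) (mem_erase.2 ⟨hij, hi⟩) (by omega : 0 < k - 1),
    card_erase_of_mem hj]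
  congr 1

/-- Subsets disjoint from `C` are subsets of `S \ C`. -/
lemma filter_disjoint_eq (S C : Finset α) (k : ℕ) :
    ((powersetCard k S).filter fun A => Disjoint A C) = powersetCard k (S \ C) := by
  ext A
  simp only [mem_filter, mem_powersetCard, subset_sdiff]
  tauto

lemma count_meet (S C : Finset α) (hC : C ⊆ S) (k : ℕ) :
    ((powersetCard k S).filter fun A => ¬ Disjoint A C).card + (S.card - C.card).choose k
      = S.card.choose k := by
  have h := card_filter_add_card_filter_not (s := powersetCard k S)
    (p := fun A => ¬ Disjoint A C)
  rw [← card_powersetCard k S, ← h]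
  congr 1
  have : ((powersetCard k S).filter fun A => ¬¬ Disjoint A C)
      = (powersetCard k S).filter fun A => Disjoint A C := by
    apply filter_congr; intro A _; exact not_not
  rw [this, filter_disjoint_eq, card_powersetCard, card_sdiff_of_subset hC]

lemma count_star_meet (S C : Finset α) {i : α} (hC : C ⊆ S) (hi : i ∈ S) (hiC : i ∉ C)
    {k : ℕ} (hk : 0 < k) :
    ((powersetCard k S).filter fun A => i ∈ A ∧ ¬ Disjoint A C).card
      + (S.card - C.card - 1).choose (k-1) = (S.card - 1).choose (k-1) := by
  have hsplit := card_filter_add_card_filter_not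
    (s := (powersetCard k S).filter fun A => i ∈ A) (p := fun A => ¬ Disjoint A C)
  rw [filter_filter, filter_filter] at hsplit
  have e2 : ((powersetCard k S).filter fun A => i ∈ A ∧ ¬¬Disjoint A C)
      = (powersetCard k (S \ C)).filter fun A => i ∈ A := by
    rw [← filter_disjoint_eq, filter_filter]
    apply filter_congr; intro A _
    constructor
    · rintro ⟨h1, h2⟩; exact ⟨not_not.1 h2, h1⟩
    · rintro ⟨h1, h2⟩; exact ⟨h2, not_not.2 h1⟩
  rw [e2] at hsplit
  have hcount2 : ((powersetCard k (S \ C)).filter fun A => i ∈ A).card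
      = ((S \ C).card - 1).choose (k-1) :=
    card_filter_mem _ (mem_sdiff.2 ⟨hi, hiC⟩) hk
  rw [hcount2, card_sdiff_of_subset hC] at hsplit
  rw [← card_filter_mem S hi hk, ← hsplit]

/-- Cross-intersecting families. -/
def Cross (𝒜 ℬ : Finset (Finset ℕ)) : Prop := ∀ A ∈ 𝒜, ∀ B ∈ ℬ, (A ∩ B).Nonempty

/-- A family with a common element (trivial / star-shaped). -/
def Triv (𝒜 : Finset (Finset ℕ)) : Prop := ∃ y, ∀ A ∈ 𝒜, y ∈ A

/-- Closed under left-compressions. -/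
def Shifted (𝒜 : Finset (Finset ℕ)) : Prop :=
  ∀ A ∈ 𝒜, ∀ i j : ℕ, i < j → j ∈ A → i ∉ A → insert i (A.erase j) ∈ 𝒜

lemma Cross.symm {𝒜 ℬ} (h : Cross 𝒜 ℬ) : Cross ℬ 𝒜 := by
  intro B hB A hA
  rw [inter_comm]; exact h A hA B hB

lemma Cross.mono {𝒜 ℬ 𝒜' ℬ'} (h : Cross 𝒜 ℬ) (h1 : 𝒜' ⊆ 𝒜) (h2 : ℬ' ⊆ ℬ) : Cross 𝒜' ℬ' :=
  fun A hA B hB => h A (h1 hA) B (h2 hB)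

lemma choose_two_mul (k : ℕ) (hk : 0 < k) : (2*k).choose k = 2 * ((2*k-1).choose (k-1)) := by
  obtain ⟨a, rfl⟩ : ∃ a, k = a + 1 := ⟨k - 1, by omega⟩
  have h1 : 2*(a+1) = (2*a+1) + 1 := by omega
  have h2 : 2*(a+1) - 1 = 2*a+1 := by omega
  have h3 : a + 1 - 1 = a := by omega
  rw [h2, h3, h1, Nat.choose_succ_succ]
  have h4 := Nat.choose_symm (show a+1 ≤ 2*a+1 by omega)
  have h5 : 2*a+1-(a+1) = a := by omega
  rw [h5] at h4
  simp only [Nat.succ_eq_add_one]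
  omega

/-- Complement-pairing bound on cross-intersecting families over a ground set of size `2k`. -/
lemma crosspair {k : ℕ} (S : Finset ℕ) (hS : S.card = 2*k) {P Q : Finset (Finset ℕ)}
    (hP : P ⊆ powersetCard k S) (hQ : Q ⊆ powersetCard k S) (hx : Cross P Q) :
    P.card + Q.card ≤ (2*k).choose k := by
  classical
  set Qc : Finset (Finset ℕ) := Q.image (fun B => S \ B) with hQc
  have hQccard : Qc.card = Q.card := by
    apply card_image_of_injOn
    intro A hA B hB h
    have hA' := (mem_powersetCard.1 (hQ hA)).1
    have hB' := (mem_powersetCard.1 (hQ hB)).1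
    have h' : S \ A = S \ B := h
    have : S \ (S \ A) = S \ (S \ B) := by rw [h']
    rwa [Finset.sdiff_sdiff_eq_self hA', Finset.sdiff_sdiff_eq_self hB'] at this
  have hQcsub : Qc ⊆ powersetCard k S := by
    intro X hX
    obtain ⟨B, hB, rfl⟩ := mem_image.1 hX
    obtain ⟨hBS, hBcard⟩ := mem_powersetCard.1 (hQ hB)
    rw [mem_powersetCard]
    constructor
    · exact sdiff_subset
    · rw [card_sdiff_of_subset hBS, hS, hBcard]; omega
  have hdisj : Disjoint P Qc := by
    rw [disjoint_left]
    intro X hXP hXQc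
    obtain ⟨B, hB, rfl⟩ := mem_image.1 hXQc
    have := hx _ hXP _ hB
    obtain ⟨x, hx'⟩ := this
    rw [mem_inter, mem_sdiff] at hx'
    exact hx'.1.2 hx'.2
  calc P.card + Q.card = (P ∪ Qc).card := by
        rw [card_union_of_disjoint hdisj, hQccard]
    _ ≤ (powersetCard k S).card := card_le_card (union_subset hP hQcsub)
    _ = (2*k).choose k := by rw [card_powersetCard, hS]

/-- Nontrivial intersecting 1-uniform families do not exist. -/
lemma k_one {𝒜 : Finset (Finset ℕ)} (h1 : ∀ A ∈ 𝒜, A.card = 1) (hx : Cross 𝒜 𝒜)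
    (hnt : ¬ Triv 𝒜) : False := by
  rcases 𝒜.eq_empty_or_nonempty with rfl | ⟨A, hA⟩
  · exact hnt ⟨0, by simp⟩
  obtain ⟨a, ha⟩ := Finset.card_eq_one.1 (h1 A hA)
  apply hnt
  refine ⟨a, fun B hB => ?_⟩
  obtain ⟨x, hx'⟩ := hx B hB A hA
  rw [mem_inter, ha, mem_singleton] at hx'
  exact hx'.2 ▸ hx'.1

/-- If a 2-set contains two distinct elements, it equals the pair. -/
lemma pair_eq {D : Finset ℕ} {u v : ℕ} (huv : u ≠ v) (hD : D.card = 2) (hu : u ∈ D)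
    (hv : v ∈ D) : D = {u, v} := by
  have hsub : ({u, v} : Finset ℕ) ⊆ D := by
    intro t ht; rw [mem_insert, mem_singleton] at ht
    rcases ht with rfl | rfl; exacts [hu, hv]
  have hcard : D.card ≤ ({u, v} : Finset ℕ).card := by
    rw [hD, card_insert_of_notMem (by simp [huv]), card_singleton]
  exact (Finset.eq_of_subset_of_card_le hsub hcard).symm

/-- Nontrivial intersecting 2-uniform families are contained in a triangle. -/
lemma triangle {𝒜 : Finset (Finset ℕ)} (h2 : ∀ A ∈ 𝒜, A.card = 2) (hx : Cross 𝒜 𝒜)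
    (hnt : ¬ Triv 𝒜) : 𝒜.card ≤ 3 := by
  rcases 𝒜.eq_empty_or_nonempty with rfl | ⟨A₀, hA₀⟩
  · simp
  obtain ⟨a, b, hab, hA₀ab⟩ := Finset.card_eq_two.1 (h2 A₀ hA₀)
  have ha' : ¬ ∀ A ∈ 𝒜, a ∈ A := fun h => hnt ⟨a, h⟩
  push_neg at ha'
  obtain ⟨A₁, hA₁, ha₁⟩ := ha'
  have hb₁ : b ∈ A₁ := by
    obtain ⟨x, hx'⟩ := hx A₁ hA₁ A₀ hA₀
    rw [mem_inter, hA₀ab, mem_insert, mem_singleton] at hx'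
    rcases hx'.2 with h | h
    · exact absurd (h ▸ hx'.1) ha₁
    · exact h ▸ hx'.1
  obtain ⟨c, hcb, hA₁bc⟩ : ∃ c, c ≠ b ∧ A₁ = {b, c} := by
    obtain ⟨x, y, hxy, hA₁xy⟩ := Finset.card_eq_two.1 (h2 A₁ hA₁)
    rw [hA₁xy, mem_insert, mem_singleton] at hb₁
    rcases hb₁ with rfl | rfl
    · exact ⟨y, hxy.symm, hA₁xy⟩
    · exact ⟨x, hxy, by rw [hA₁xy, pair_comm]⟩
  have hca : c ≠ a := by
    rintro rfl
    rw [hA₁bc, mem_insert, mem_singleton] at ha₁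
    push_neg at ha₁; exact ha₁.2 rfl
  have hb' : ¬ ∀ A ∈ 𝒜, b ∈ A := fun h => hnt ⟨b, h⟩
  push_neg at hb'
  obtain ⟨A₂, hA₂, hb₂⟩ := hb'
  have ha₂ : a ∈ A₂ := by
    obtain ⟨x, hx'⟩ := hx A₂ hA₂ A₀ hA₀
    rw [mem_inter, hA₀ab, mem_insert, mem_singleton] at hx'
    rcases hx'.2 with h | h
    · exact h ▸ hx'.1
    · exact absurd (h ▸ hx'.1) hb₂
  have hc₂ : c ∈ A₂ := by
    obtain ⟨x, hx'⟩ := hx A₂ hA₂ A₁ hA₁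
    rw [mem_inter, hA₁bc, mem_insert, mem_singleton] at hx'
    rcases hx'.2 with h | h
    · exact absurd (h ▸ hx'.1) hb₂
    · exact h ▸ hx'.1
  have hsub : 𝒜 ⊆ {({a,b} : Finset ℕ), {b,c}, {a,c}} := by
    intro D hD
    simp only [mem_insert, mem_singleton]
    by_cases haD : a ∈ D
    · obtain ⟨x, hx'⟩ := hx D hD A₁ hA₁
      rw [mem_inter, hA₁bc, mem_insert, mem_singleton] at hx'
      rcases hx'.2 with h | h
      · exact Or.inl (pair_eq hab (h2 D hD) haD (h ▸ hx'.1))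
      · exact Or.inr (Or.inr (pair_eq (Ne.symm hca) (h2 D hD) haD (h ▸ hx'.1)))
    · have hbD : b ∈ D := by
        obtain ⟨x, hx'⟩ := hx D hD A₀ hA₀
        rw [mem_inter, hA₀ab, mem_insert, mem_singleton] at hx'
        rcases hx'.2 with h | h
        · exact absurd (h ▸ hx'.1) haD
        · exact h ▸ hx'.1
      have hcD : c ∈ D := by
        obtain ⟨x, hx'⟩ := hx D hD A₂ hA₂
        have hA₂ac : A₂ = {a, c} := pair_eq (Ne.symm hca) (h2 A₂ hA₂) ha₂ hc₂
        rw [mem_inter, hA₂ac, mem_insert, mem_singleton] at hx'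
        rcases hx'.2 with h | h
        · exact absurd (h ▸ hx'.1) haD
        · exact h ▸ hx'.1
      exact Or.inr (Or.inl (pair_eq (Ne.symm hcb) (h2 D hD) hbD hcD))
  calc 𝒜.card ≤ _ := card_le_card hsub
    _ ≤ 3 := by
      apply le_trans (card_insert_le _ _)
      apply Nat.succ_le_succ
      apply le_trans (card_insert_le _ _)
      apply Nat.succ_le_succ
      simp

/-! ### Compression machinery -/

/-- The `(i,j)`-compression of a single set. -/
def cp (i j : ℕ) (A : Finset ℕ) : Finset ℕ :=
  if j ∈ A ∧ i ∉ A then insert i (A.erase j) else A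

/-- The `(i,j)`-compression of a family. -/
def cf (i j : ℕ) (𝒜 : Finset (Finset ℕ)) : Finset (Finset ℕ) :=
  (𝒜.filter fun A => cp i j A ∈ 𝒜) ∪ ((𝒜.filter fun A => cp i j A ∉ 𝒜).image (cp i j))

lemma cp_of_mem {i j : ℕ} {A : Finset ℕ} (hj : j ∈ A) (hi : i ∉ A) :
    cp i j A = insert i (A.erase j) := if_pos ⟨hj, hi⟩

lemma cp_ne_cases {i j : ℕ} {A : Finset ℕ} (h : cp i j A ≠ A) :
    j ∈ A ∧ i ∉ A ∧ cp i j A = insert i (A.erase j) := by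
  by_cases hc : j ∈ A ∧ i ∉ A
  · exact ⟨hc.1, hc.2, if_pos hc⟩
  · exact absurd (if_neg hc) h

lemma mem_cp_i {i j : ℕ} {A : Finset ℕ} (hj : j ∈ A) (hi : i ∉ A) : i ∈ cp i j A := by
  rw [cp_of_mem hj hi]; exact mem_insert_self _ _

lemma cp_card {i j : ℕ} (A : Finset ℕ) : (cp i j A).card = A.card := by
  unfold cp
  split_ifs with h
  · rw [card_insert_of_notMem (fun hmem => h.2 (mem_of_mem_erase hmem)),
      card_erase_of_mem h.1]
    have : 0 < A.card := card_pos.2 ⟨j, h.1⟩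
    omega
  · rfl

lemma cp_subset_range {i j n : ℕ} (hij : i < j) {A : Finset ℕ} (hA : A ⊆ range n) :
    cp i j A ⊆ range n := by
  unfold cp
  split_ifs with h
  · intro x hx
    rw [mem_insert] at hx
    rcases hx with rfl | hx
    · have := hA h.1; rw [mem_range] at *; omega
    · exact hA (mem_of_mem_erase hx)
  · exact hA

lemma mem_cf {i j : ℕ} {𝒜 : Finset (Finset ℕ)} {X : Finset ℕ} :
    X ∈ cf i j 𝒜 ↔ (X ∈ 𝒜 ∧ cp i j X ∈ 𝒜) ∨ (∃ A ∈ 𝒜, cp i j A ∉ 𝒜 ∧ X = cp i j A) := by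
  unfold cf
  simp only [mem_union, mem_filter, mem_image]
  constructor
  · rintro (h | ⟨A, ⟨hA, hA'⟩, rfl⟩)
    · exact Or.inl h
    · exact Or.inr ⟨A, hA, hA', rfl⟩
  · rintro (h | ⟨A, hA, hA', rfl⟩)
    · exact Or.inl h
    · exact Or.inr ⟨A, ⟨hA, hA'⟩, rfl⟩

lemma mem_cf_of_mem {i j : ℕ} {𝒜 : Finset (Finset ℕ)} {A : Finset ℕ} (hA : A ∈ 𝒜)
    (h : cp i j A ∈ 𝒜) : A ∈ cf i j 𝒜 := mem_cf.2 (Or.inl ⟨hA, h⟩)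

lemma cp_idem (i j : ℕ) (A : Finset ℕ) : cp i j (cp i j A) = cp i j A := by
  by_cases hne : cp i j A = A
  · rw [hne]; exact hne
  · obtain ⟨hj, hi, he⟩ := cp_ne_cases hne
    have hicp : i ∈ cp i j A := he ▸ mem_insert_self _ _
    unfold cp
    rw [if_neg (fun hc => hc.2 hicp)]

lemma cp_mem_cf {i j : ℕ} {𝒜 : Finset (Finset ℕ)} {A : Finset ℕ} (hA : A ∈ 𝒜) :
    cp i j A ∈ cf i j 𝒜 := by
  by_cases h : cp i j A ∈ 𝒜
  · exact mem_cf_of_mem h (by rw [cp_idem]; exact h)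
  · exact mem_cf.2 (Or.inr ⟨A, hA, h, rfl⟩)

lemma card_cf (i j : ℕ) (hij : i ≠ j) (𝒜 : Finset (Finset ℕ)) : (cf i j 𝒜).card = 𝒜.card := by
  classical
  unfold cf
  rw [card_union_of_disjoint, card_image_of_injOn]
  · rw [card_filter_add_card_filter_not]
  · -- injective on the moved part
    intro A hA B hB h
    simp only [coe_filter, Set.mem_setOf_eq] at hA hB
    have hAne : cp i j A ≠ A := fun he => hA.2 (by rw [he]; exact hA.1)
    have hBne : cp i j B ≠ B := fun he => hB.2 (by rw [he]; exact hB.1)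
    obtain ⟨hjA, hiA, heA⟩ := cp_ne_cases hAne
    obtain ⟨hjB, hiB, heB⟩ := cp_ne_cases hBne
    have : insert i (A.erase j) = insert i (B.erase j) := by rw [← heA, ← heB]; exact h
    have h2 : A.erase j = B.erase j := by
      have hiA' : i ∉ A.erase j := fun hc => hiA (mem_of_mem_erase hc)
      have hiB' : i ∉ B.erase j := fun hc => hiB (mem_of_mem_erase hc)
      have h3 := congrArg (fun S => Finset.erase S i) this
      simpa [erase_insert hiA', erase_insert hiB'] using h3
    rw [← insert_erase hjA, ← insert_erase hjB, h2]
  · -- disjointness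
    rw [disjoint_left]
    intro X hX hX'
    simp only [mem_filter] at hX
    obtain ⟨A, hA, rfl⟩ := mem_image.1 hX'
    simp only [mem_filter] at hA
    exact hA.2 hX.1

lemma cf_subset_powersetCard {i j n k : ℕ} (hij : i < j) {𝒜 : Finset (Finset ℕ)}
    (h : 𝒜 ⊆ powersetCard k (range n)) : cf i j 𝒜 ⊆ powersetCard k (range n) := by
  intro X hX
  rcases mem_cf.1 hX with ⟨h1, _⟩ | ⟨A, hA, _, rfl⟩
  · exact h h1
  · obtain ⟨hsub, hcard⟩ := mem_powersetCard.1 (h hA)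
    exact mem_powersetCard.2 ⟨cp_subset_range hij hsub, by rw [cp_card, hcard]⟩

/-- Key step: a (possibly moved) member of `cf 𝒜` intersects every unmoved member of `ℬ`. -/
lemma cf_cross_key {i j : ℕ} {𝒜 ℬ : Finset (Finset ℕ)} (hx : Cross 𝒜 ℬ)
    {X B : Finset ℕ} (hX : X ∈ cf i j 𝒜) (hB : B ∈ ℬ) (hBcp : cp i j B ∈ ℬ) :
    (X ∩ B).Nonempty := by
  rcases mem_cf.1 hX with ⟨h1, _⟩ | ⟨A, hA, hA', rfl⟩
  · exact hx _ h1 _ hB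
  · have hAne : cp i j A ≠ A := fun he => hA' (by rw [he]; exact hA)
    obtain ⟨hjA, hiA, heA⟩ := cp_ne_cases hAne
    by_cases hiB : i ∈ B
    · exact ⟨i, mem_inter.2 ⟨mem_cp_i hjA hiA, hiB⟩⟩
    · by_cases hsub : ∃ x ∈ A ∩ B, x ≠ j
      · obtain ⟨x, hx', hxj⟩ := hsub
        rw [mem_inter] at hx'
        refine ⟨x, mem_inter.2 ⟨?_, hx'.2⟩⟩
        rw [heA, mem_insert]
        exact Or.inr (mem_erase.2 ⟨hxj, hx'.1⟩)
      · -- A ∩ B = {j}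
        push_neg at hsub
        obtain ⟨x, hx'⟩ := hx _ hA _ hB
        have hxj : x = j := hsub x hx'
        rw [mem_inter] at hx'
        have hjB : j ∈ B := hxj ▸ hx'.2
        have hBne : cp i j B = insert i (B.erase j) := cp_of_mem hjB hiB
        -- A and cp B are disjoint: contradiction with Cross
        exfalso
        obtain ⟨y, hy⟩ := hx _ hA _ hBcp
        rw [mem_inter, hBne, mem_insert] at hy
        rcases hy.2 with rfl | hy2
        · exact hiA hy.1
        · rw [mem_erase] at hy2
          exact hy2.1 (hsub y (mem_inter.2 ⟨hy.1, hy2.2⟩))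

lemma cf_cross {i j : ℕ} {𝒜 ℬ : Finset (Finset ℕ)} (hx : Cross 𝒜 ℬ) :
    Cross (cf i j 𝒜) (cf i j ℬ) := by
  intro X hX Y hY
  rcases mem_cf.1 hY with ⟨hY1, hY2⟩ | ⟨B, hB, hB', rfl⟩
  · exact cf_cross_key hx hX hY1 hY2
  · have hBne : cp i j B ≠ B := fun he => hB' (by rw [he]; exact hB)
    obtain ⟨hjB, hiB, heB⟩ := cp_ne_cases hBne
    rcases mem_cf.1 hX with ⟨hX1, hX2⟩ | ⟨A, hA, hA', rfl⟩
    · rw [inter_comm]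
      exact cf_cross_key hx.symm (mem_cf.2 (Or.inr ⟨B, hB, hB', rfl⟩)) hX1 hX2
    · have hAne : cp i j A ≠ A := fun he => hA' (by rw [he]; exact hA)
      obtain ⟨hjA, hiA, _⟩ := cp_ne_cases hAne
      exact ⟨i, mem_inter.2 ⟨mem_cp_i hjA hiA, mem_cp_i hjB hiB⟩⟩

/-- The weight measure used for termination of the shifting process. -/
def ms (𝒜 : Finset (Finset ℕ)) : ℕ := ∑ A ∈ 𝒜, ∑ x ∈ A, x

lemma cp_sum_lt {i j : ℕ} (hij : i < j) {A : Finset ℕ} (h : cp i j A ≠ A) :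
    ∑ x ∈ cp i j A, x < ∑ x ∈ A, x := by
  obtain ⟨hjA, hiA, he⟩ := cp_ne_cases h
  rw [he, sum_insert (fun hc => hiA (mem_of_mem_erase hc))]
  have h2 : ∑ x ∈ A.erase j, x + j = ∑ x ∈ A, x := Finset.sum_erase_add A _ hjA
  omega

lemma ms_cf_le {i j : ℕ} (hij : i < j) (𝒜 : Finset (Finset ℕ)) : ms (cf i j 𝒜) ≤ ms 𝒜 := by
  classical
  unfold ms cf
  rw [sum_union, Finset.sum_image]
  · have h1 : ∀ A ∈ 𝒜.filter (fun A => cp i j A ∉ 𝒜), ∑ x ∈ cp i j A, x ≤ ∑ x ∈ A, x := by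
      intro A hA
      simp only [mem_filter] at hA
      have hne : cp i j A ≠ A := fun he => hA.2 (by rw [he]; exact hA.1)
      exact (cp_sum_lt hij hne).le
    calc (∑ A ∈ 𝒜.filter (fun A => cp i j A ∈ 𝒜), ∑ x ∈ A, x)
          + ∑ A ∈ 𝒜.filter (fun A => cp i j A ∉ 𝒜), ∑ x ∈ cp i j A, x
        ≤ (∑ A ∈ 𝒜.filter (fun A => cp i j A ∈ 𝒜), ∑ x ∈ A, x)
          + ∑ A ∈ 𝒜.filter (fun A => cp i j A ∉ 𝒜), ∑ x ∈ A, x := by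
          exact Nat.add_le_add_left (Finset.sum_le_sum h1) _
      _ = ∑ A ∈ 𝒜, ∑ x ∈ A, x := by
          rw [Finset.sum_filter_add_sum_filter_not]
  · -- injectivity (same as in card_cf)
    intro A hA B hB h
    simp only [coe_filter, Set.mem_setOf_eq] at hA hB
    have hAne : cp i j A ≠ A := fun he => hA.2 (by rw [he]; exact hA.1)
    have hBne : cp i j B ≠ B := fun he => hB.2 (by rw [he]; exact hB.1)
    obtain ⟨hjA, hiA, heA⟩ := cp_ne_cases hAne
    obtain ⟨hjB, hiB, heB⟩ := cp_ne_cases hBne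
    have hthis : insert i (A.erase j) = insert i (B.erase j) := by rw [← heA, ← heB]; exact h
    have h2 : A.erase j = B.erase j := by
      have hiA' : i ∉ A.erase j := fun hc => hiA (mem_of_mem_erase hc)
      have hiB' : i ∉ B.erase j := fun hc => hiB (mem_of_mem_erase hc)
      have h3 := congrArg (fun S => Finset.erase S i) hthis
      simpa [erase_insert hiA', erase_insert hiB'] using h3
    rw [← insert_erase hjA, ← insert_erase hjB, h2]
  · rw [disjoint_left]
    intro X hX hX'
    simp only [mem_filter] at hX
    obtain ⟨A, hA, rfl⟩ := mem_image.1 hX'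
    simp only [mem_filter] at hA
    exact hA.2 hX.1

lemma ms_cf_lt {i j : ℕ} (hij : i < j) {𝒜 : Finset (Finset ℕ)} (hne : cf i j 𝒜 ≠ 𝒜) :
    ms (cf i j 𝒜) < ms 𝒜 := by
  classical
  -- the moved part is nonempty
  have hmv : (𝒜.filter fun A => cp i j A ∉ 𝒜).Nonempty := by
    by_contra hc
    rw [not_nonempty_iff_eq_empty] at hc
    apply hne
    unfold cf
    rw [hc, image_empty, union_empty]
    apply filter_true_of_mem
    intro A hA
    by_contra hc2
    have : A ∈ 𝒜.filter fun A => cp i j A ∉ 𝒜 := mem_filter.2 ⟨hA, hc2⟩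
    rw [hc] at this
    exact notMem_empty _ this
  unfold ms cf
  rw [sum_union, Finset.sum_image]
  · have key : ∑ A ∈ 𝒜.filter (fun A => cp i j A ∉ 𝒜), ∑ x ∈ cp i j A, x
        < ∑ A ∈ 𝒜.filter (fun A => cp i j A ∉ 𝒜), ∑ x ∈ A, x := by
      apply Finset.sum_lt_sum_of_nonempty hmv
      intro A hA
      simp only [mem_filter] at hA
      exact cp_sum_lt hij (fun he => hA.2 (by rw [he]; exact hA.1))
    have := Finset.sum_filter_add_sum_filter_not 𝒜 (fun A => cp i j A ∈ 𝒜) (fun A => ∑ x ∈ A, x)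
    omega
  · intro A hA B hB h
    simp only [coe_filter, Set.mem_setOf_eq] at hA hB
    have hAne : cp i j A ≠ A := fun he => hA.2 (by rw [he]; exact hA.1)
    have hBne : cp i j B ≠ B := fun he => hB.2 (by rw [he]; exact hB.1)
    obtain ⟨hjA, hiA, heA⟩ := cp_ne_cases hAne
    obtain ⟨hjB, hiB, heB⟩ := cp_ne_cases hBne
    have hthis : insert i (A.erase j) = insert i (B.erase j) := by rw [← heA, ← heB]; exact h
    have h2 : A.erase j = B.erase j := by
      have hiA' : i ∉ A.erase j := fun hc => hiA (mem_of_mem_erase hc)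
      have hiB' : i ∉ B.erase j := fun hc => hiB (mem_of_mem_erase hc)
      have h3 := congrArg (fun S => Finset.erase S i) hthis
      simpa [erase_insert hiA', erase_insert hiB'] using h3
    rw [← insert_erase hjA, ← insert_erase hjB, h2]
  · rw [disjoint_left]
    intro X hX hX'
    simp only [mem_filter] at hX
    obtain ⟨A, hA, rfl⟩ := mem_image.1 hX'
    simp only [mem_filter] at hA
    exact hA.2 hX.1

/-- If the compressed family is a star but the original one is not, then `{i,j}` covers `𝒜`. -/
lemma cover_of_triv_cf {i j : ℕ} {𝒜 : Finset (Finset ℕ)} (hnt : ¬ Triv 𝒜)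
    (ht : Triv (cf i j 𝒜)) : ∀ A ∈ 𝒜, i ∈ A ∨ j ∈ A := by
  obtain ⟨y, hy⟩ := ht
  by_cases hyi : y = i
  · rw [hyi] at hy
    intro A hA
    by_cases h : cp i j A ∈ 𝒜
    · exact Or.inl (hy A (mem_cf_of_mem hA h))
    · have hX := hy _ (mem_cf.2 (Or.inr ⟨A, hA, h, rfl⟩))
      have hne : cp i j A ≠ A := fun he => h (by rw [he]; exact hA)
      obtain ⟨hjA, _, _⟩ := cp_ne_cases hne
      exact Or.inr hjA
  · exfalso
    apply hnt
    refine ⟨y, fun A hA => ?_⟩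
    by_cases h : cp i j A ∈ 𝒜
    · exact hy A (mem_cf_of_mem hA h)
    · have hX := hy _ (mem_cf.2 (Or.inr ⟨A, hA, h, rfl⟩))
      have hne : cp i j A ≠ A := fun he => h (by rw [he]; exact hA)
      obtain ⟨hjA, hiA, heA⟩ := cp_ne_cases hne
      rw [heA, mem_insert] at hX
      rcases hX with h | hX
      · exact absurd h hyi
      · exact mem_of_mem_erase hX

/-! ### Structure of shifted families -/

lemma insert_erase_card {A : Finset ℕ} {i j : ℕ} (hj : j ∈ A) (hi : i ∉ A) :
    (insert i (A.erase j)).card = A.card := by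
  rw [← cp_of_mem hj hi, cp_card]

lemma insert_erase_sum_lt {A : Finset ℕ} {i j : ℕ} (hij : i < j) (hj : j ∈ A) (hi : i ∉ A) :
    ∑ x ∈ insert i (A.erase j), x < ∑ x ∈ A, x := by
  have hne : cp i j A ≠ A := fun he => hi (he ▸ mem_cp_i hj hi)
  have := cp_sum_lt hij hne
  rwa [cp_of_mem hj hi] at this

lemma shifted_common_zero {𝒜 : Finset (Finset ℕ)} (hsh : Shifted 𝒜) {y : ℕ}
    (hy : ∀ A ∈ 𝒜, y ∈ A) : ∀ A ∈ 𝒜, 0 ∈ A := by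
  intro A hA
  by_contra h0
  rcases Nat.eq_zero_or_pos y with rfl | hy0
  · exact h0 (hy A hA)
  have hmem := hsh A hA 0 y hy0 (hy A hA) h0
  have := hy _ hmem
  rw [mem_insert, mem_erase] at this
  rcases this with h | h
  · omega
  · exact h.1 rfl

/-- Any member of a shifted family can be pushed down to `{0, …, k-1}`. -/
lemma shifted_range_mem {𝒜 : Finset (Finset ℕ)} (hsh : Shifted 𝒜) :
    ∀ N A, (∑ x ∈ A, x) ≤ N → A ∈ 𝒜 → range A.card ∈ 𝒜 := by
  intro N
  induction N using Nat.strong_induction_on with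
  | _ N ih =>
    intro A hN hA
    by_cases heq : A = range A.card
    · rw [← heq]; exact hA
    have h1 : ¬ range A.card ⊆ A := fun hsub =>
      heq (Finset.eq_of_subset_of_card_le hsub (by rw [card_range])).symm
    have h2 : ¬ A ⊆ range A.card := fun hsub =>
      heq (Finset.eq_of_subset_of_card_le hsub (by rw [card_range]))
    obtain ⟨i, hi_mem, hi⟩ := not_subset.1 h1
    obtain ⟨j, hj, hj_mem⟩ := not_subset.1 h2
    rw [mem_range] at hi_mem hj_mem
    have hij : i < j := by omega
    have hA' : insert i (A.erase j) ∈ 𝒜 := hsh A hA i j hij hj hi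
    have hcard : (insert i (A.erase j)).card = A.card := insert_erase_card hj hi
    have hsum := insert_erase_sum_lt hij hj hi
    have := ih (∑ x ∈ insert i (A.erase j), x) (by omega) _ le_rfl hA'
    rwa [hcard] at this

/-- Any member of a shifted family avoiding `0` can be pushed down to `{1, …, k}`. -/
lemma shifted_Ico_mem {𝒜 : Finset (Finset ℕ)} (hsh : Shifted 𝒜) {k : ℕ} :
    ∀ N A, (∑ x ∈ A, x) ≤ N → A ∈ 𝒜 → 0 ∉ A → A.card = k →
      Finset.Ico 1 (k+1) ∈ 𝒜 := by
  intro N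
  induction N using Nat.strong_induction_on with
  | _ N ih =>
    intro A hN hA h0 hk
    have hIcard : (Finset.Ico 1 (k+1)).card = k := by rw [Nat.card_Ico]; omega
    by_cases heq : A = Finset.Ico 1 (k+1)
    · rw [← heq]; exact hA
    have h1 : ¬ Finset.Ico 1 (k+1) ⊆ A := fun hsub =>
      heq (Finset.eq_of_subset_of_card_le hsub (by rw [hIcard, hk])).symm
    have h2 : ¬ A ⊆ Finset.Ico 1 (k+1) := fun hsub =>
      heq (Finset.eq_of_subset_of_card_le hsub (by rw [hIcard, hk]))
    obtain ⟨i, hi_mem, hi⟩ := not_subset.1 h1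
    obtain ⟨j, hj, hj_mem⟩ := not_subset.1 h2
    rw [Finset.mem_Ico] at hi_mem hj_mem
    have hj0 : j ≠ 0 := fun hc => h0 (hc ▸ hj)
    have hij : i < j := by omega
    have hA' : insert i (A.erase j) ∈ 𝒜 := hsh A hA i j hij hj hi
    have hcard : (insert i (A.erase j)).card = k := by rw [insert_erase_card hj hi, hk]
    have h0' : 0 ∉ insert i (A.erase j) := by
      rw [mem_insert]
      push_neg
      exact ⟨by omega, fun hc => h0 (mem_of_mem_erase hc)⟩
    have hsum := insert_erase_sum_lt hij hj hi
    exact ih (∑ x ∈ insert i (A.erase j), x) (by omega) _ le_rfl hA' h0' hcard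

/-! ### Restriction to a smaller ground set -/

/-- Members avoiding `v`. -/
def resM (v : ℕ) (𝒜 : Finset (Finset ℕ)) : Finset (Finset ℕ) := 𝒜.filter fun A => v ∉ A

/-- Traces of members containing `v`. -/
def resP (v : ℕ) (𝒜 : Finset (Finset ℕ)) : Finset (Finset ℕ) :=
  (𝒜.filter fun A => v ∈ A).image fun A => A.erase v

lemma card_resM_add_resP (v : ℕ) (𝒜 : Finset (Finset ℕ)) :
    (resM v 𝒜).card + (resP v 𝒜).card = 𝒜.card := by
  classical
  unfold resM resP
  rw [card_image_of_injOn]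
  · rw [add_comm]
    have := card_filter_add_card_filter_not (s := 𝒜) (p := fun A => v ∈ A)
    omega
  · intro A hA B hB h
    simp only [coe_filter, Set.mem_setOf_eq] at hA hB
    have h' : A.erase v = B.erase v := h
    rw [← insert_erase hA.2, ← insert_erase hB.2, h']

lemma resM_subset {v n k : ℕ} (hv : v = n - 1) (hn : 0 < n) {𝒜 : Finset (Finset ℕ)}
    (h : 𝒜 ⊆ powersetCard k (range n)) : resM v 𝒜 ⊆ powersetCard k (range (n-1)) := by
  intro A hA
  rw [resM, mem_filter] at hA
  obtain ⟨hsub, hcard⟩ := mem_powersetCard.1 (h hA.1)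
  rw [mem_powersetCard]
  refine ⟨fun x hx => ?_, hcard⟩
  have h1 := hsub hx
  rw [mem_range] at *
  have : x ≠ v := fun hc => hA.2 (hc ▸ hx)
  omega

lemma resP_subset {v n k : ℕ} (hv : v = n - 1) (hn : 0 < n) (hk : 0 < k)
    {𝒜 : Finset (Finset ℕ)} (h : 𝒜 ⊆ powersetCard k (range n)) :
    resP v 𝒜 ⊆ powersetCard (k-1) (range (n-1)) := by
  intro P hP
  rw [resP, mem_image] at hP
  obtain ⟨A, hA, rfl⟩ := hP
  rw [mem_filter] at hA
  obtain ⟨hsub, hcard⟩ := mem_powersetCard.1 (h hA.1)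
  rw [mem_powersetCard]
  constructor
  · intro x hx
    rw [mem_erase] at hx
    have h1 := hsub hx.2
    have h2 := hsub hA.2
    rw [mem_range] at *
    omega
  · rw [card_erase_of_mem hA.2, hcard]

lemma resM_shifted {v n k : ℕ} (hv : v = n - 1) {𝒜 : Finset (Finset ℕ)}
    (h : 𝒜 ⊆ powersetCard k (range n)) (hsh : Shifted 𝒜) : Shifted (resM v 𝒜) := by
  intro A hA i j hij hj hi
  rw [resM, mem_filter] at hA ⊢
  have hjv : j ≠ v := fun hc => hA.2 (hc ▸ hj)
  have hjn : j ∈ range n := (mem_powersetCard.1 (h hA.1)).1 hj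
  rw [mem_range] at hjn
  refine ⟨hsh A hA.1 i j hij hj hi, ?_⟩
  rw [mem_insert]
  push_neg
  constructor
  · omega
  · intro hc
    exact hA.2 (mem_of_mem_erase hc)

lemma resP_shifted {v n k : ℕ} (hv : v = n - 1) {𝒜 : Finset (Finset ℕ)}
    (h : 𝒜 ⊆ powersetCard k (range n)) (hsh : Shifted 𝒜) : Shifted (resP v 𝒜) := by
  intro P hP i j hij hj hi
  rw [resP, mem_image] at hP
  obtain ⟨A, hA, rfl⟩ := hP
  rw [mem_filter] at hA
  have hjA : j ∈ A := mem_of_mem_erase hj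
  have hjv : j ≠ v := (mem_erase.1 hj).1
  have hiv : i ≠ v := by
    have hjn : j ∈ range n := (mem_powersetCard.1 (h hA.1)).1 hjA
    rw [mem_range] at hjn
    -- j ≠ v and j < n and v = n-1 imply j < v, so i < v
    intro hc
    omega
  have hiA : i ∉ A := by
    intro hc
    exact hi (mem_erase.2 ⟨hiv, hc⟩)
  have hA' : insert i (A.erase j) ∈ 𝒜 := hsh A hA.1 i j hij hjA hiA
  rw [resP, mem_image]
  refine ⟨insert i (A.erase j), mem_filter.2 ⟨hA', ?_⟩, ?_⟩
  · rw [mem_insert]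
    exact Or.inr (mem_erase.2 ⟨fun hc => hjv hc.symm, hA.2⟩)
  · rw [erase_insert_of_ne hiv, erase_right_comm]

/-- Intersecting-ness of the trace family, via shiftedness and a spare element. -/
lemma resP_cross {v n k : ℕ} (hv : v = n - 1) (hn : 2*k ≤ n) (hk : 0 < k)
    {𝒜 ℬ : Finset (Finset ℕ)} (h𝒜 : 𝒜 ⊆ powersetCard k (range n))
    (hℬ : ℬ ⊆ powersetCard k (range n)) (hx : Cross 𝒜 ℬ) (hshB : Shifted ℬ) :
    Cross (resP v 𝒜) (resP v ℬ) := by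
  intro P hP Q hQ
  rw [resP, mem_image] at hP hQ
  obtain ⟨A, hA, rfl⟩ := hP
  obtain ⟨B, hB, rfl⟩ := hQ
  rw [mem_filter] at hA hB
  by_contra hc
  rw [not_nonempty_iff_eq_empty] at hc
  obtain ⟨hAsub, hAcard⟩ := mem_powersetCard.1 (h𝒜 hA.1)
  obtain ⟨hBsub, hBcard⟩ := mem_powersetCard.1 (hℬ hB.1)
  have hdisj : Disjoint (A.erase v) (B.erase v) := disjoint_iff_inter_eq_empty.2 hc
  have hcards : (A.erase v ∪ B.erase v).card = 2*k - 2 := by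
    rw [card_union_of_disjoint hdisj, card_erase_of_mem hA.2, card_erase_of_mem hB.2,
      hAcard, hBcard]
    omega
  have hUsub : A.erase v ∪ B.erase v ⊆ range (n-1) := by
    intro x hx'
    rw [mem_union, mem_erase, mem_erase] at hx'
    have h1 : x ∈ range n := by
      rcases hx' with h' | h'
      · exact hAsub h'.2
      · exact hBsub h'.2
    have h2 : x ≠ v := by rcases hx' with h' | h' <;> exact h'.1
    rw [mem_range] at *
    omega
  have hex : (range (n-1) \ (A.erase v ∪ B.erase v)).Nonempty := by
    rw [← card_pos, card_sdiff_of_subset hUsub, card_range, hcards]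
    omega
  obtain ⟨c, hcmem⟩ := hex
  rw [mem_sdiff, mem_range] at hcmem
  have hcv : c < v := by omega
  have hcB : c ∉ B := by
    intro hc'
    have : c ∈ B.erase v := mem_erase.2 ⟨by omega, hc'⟩
    exact hcmem.2 (mem_union.2 (Or.inr this))
  have hB' : insert c (B.erase v) ∈ ℬ := hshB B hB.1 c v hcv hB.2 hcB
  obtain ⟨x, hx'⟩ := hx A hA.1 _ hB'
  rw [mem_inter, mem_insert] at hx'
  rcases hx'.2 with rfl | hxB
  · -- x = c ∈ A: but c ∉ A
    have : x ∈ A.erase v := mem_erase.2 ⟨by omega, hx'.1⟩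
    exact hcmem.2 (mem_union.2 (Or.inl this))
  · -- x ∈ B.erase v and x ∈ A
    have hxv : x ≠ v := (mem_erase.1 hxB).1
    have : x ∈ A.erase v := mem_erase.2 ⟨hxv, hx'.1⟩
    have : x ∈ (A.erase v) ∩ (B.erase v) := mem_inter.2 ⟨this, hxB⟩
    rw [hc] at this
    exact notMem_empty _ this

/-! ### The cross-intersecting inequality (Frankl–Tokushige) -/

theorem CI_shifted : ∀ m : ℕ, ∀ (a : ℕ) (P Q : Finset (Finset ℕ)), 1 ≤ a → 2*a ≤ m →
    P ⊆ powersetCard a (range m) → Q ⊆ powersetCard a (range m) →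
    Shifted P → Shifted Q → Cross P Q → P.Nonempty → Q.Nonempty →
    P.card + Q.card + (m-a).choose a ≤ m.choose a + 1 := by
  intro m
  induction m using Nat.strong_induction_on with
  | _ m ih =>
    intro a P Q ha ham hPs hQs hshP hshQ hx hPne hQne
    rcases eq_or_lt_of_le ham with hameq | hamlt
    · -- base case m = 2a
      have hcp := crosspair (k := a) (range m) (by rw [card_range, hameq]) hPs hQs hx
      have h1 : m - a = a := by omega
      rw [h1, Nat.choose_self, ← hameq]
      omega
    · -- inductive case, m ≥ 2a+1
      have hm1 : 2*a ≤ m - 1 := by omega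
      have hm0 : 0 < m := by omega
      set v := m - 1 with hv
      -- the base sets
      have hrange_mem : ∀ (R : Finset (Finset ℕ)), R ⊆ powersetCard a (range m) →
          Shifted R → R.Nonempty → range a ∈ R := by
        intro R hRs hshR ⟨A0, hA0⟩
        have := shifted_range_mem hshR (∑ x ∈ A0, x) A0 le_rfl hA0
        rwa [(mem_powersetCard.1 (hRs hA0)).2] at this
      have hPbase : range a ∈ P := hrange_mem P hPs hshP hPne
      have hQbase : range a ∈ Q := hrange_mem Q hQs hshQ hQne
      have hvrange : v ∉ range a := by rw [mem_range]; omega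
      -- restrictions
      have hPmS := resM_subset hv hm0 hPs
      have hQmS := resM_subset hv hm0 hQs
      have hPpS := resP_subset hv hm0 (by omega) hPs
      have hQpS := resP_subset hv hm0 (by omega) hQs
      have hPmsh := resM_shifted hv hPs hshP
      have hQmsh := resM_shifted hv hQs hshQ
      have hPpsh := resP_shifted hv hPs hshP
      have hQpsh := resP_shifted hv hQs hshQ
      have hxm : Cross (resM v P) (resM v Q) := hx.mono (filter_subset _ _) (filter_subset _ _)
      have hxp : Cross (resP v P) (resP v Q) := resP_cross hv ham (by omega) hPs hQs hx hshQ
      have hPmne : (resM v P).Nonempty := ⟨range a, mem_filter.2 ⟨hPbase, hvrange⟩⟩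
      have hQmne : (resM v Q).Nonempty := ⟨range a, mem_filter.2 ⟨hQbase, hvrange⟩⟩
      have hcardP := card_resM_add_resP v P
      have hcardQ := card_resM_add_resP v Q
      -- bound for the minus parts, from the induction hypothesis
      have s1 : (resM v P).card + (resM v Q).card + (m-1-a).choose a ≤ (m-1).choose a + 1 := by
        have := ih (m-1) (by omega) a (resM v P) (resM v Q) ha hm1 hPmS hQmS hPmsh hQmsh
          hxm hPmne hQmne
        rwa [hv] at this ⊢
      -- generic bound for a plus part whose opposite side contains `range a`
      have plus_bound : ∀ (R T : Finset (Finset ℕ)), R ⊆ powersetCard a (range m) →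
          Cross R T → range a ∈ T →
          (resP v R).card + (m-1-a).choose (a-1) ≤ (m-1).choose (a-1) := by
        intro R T hRs hxRT hTbase
        have hsub : resP v R ⊆ (powersetCard (a-1) (range (m-1))).filter
            fun X => ¬ Disjoint X (range a) := by
          intro X hX
          have hXmem := resP_subset hv hm0 (by omega) hRs hX
          rw [mem_filter]
          refine ⟨hXmem, ?_⟩
          rw [resP, mem_image] at hX
          obtain ⟨A, hA, rfl⟩ := hX
          rw [mem_filter] at hA
          obtain ⟨x, hx'⟩ := hxRT A hA.1 _ hTbase
          rw [mem_inter, mem_range] at hx'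
          rw [not_disjoint_iff_nonempty_inter]
          refine ⟨x, mem_inter.2 ⟨mem_erase.2 ⟨by omega, hx'.1⟩, by rw [mem_range]; omega⟩⟩
        have hcount := count_meet (range (m-1)) (range a)
          (by intro x hx'; rw [mem_range] at *; omega) (a-1)
        rw [card_range, card_range] at hcount
        have := card_le_card hsub
        omega
      have s2P : (resP v P).card + (m-1-a).choose (a-1) ≤ (m-1).choose (a-1) :=
        plus_bound P Q hPs hx hQbase
      have s2Q : (resP v Q).card + (m-1-a).choose (a-1) ≤ (m-1).choose (a-1) :=
        plus_bound Q P hQs hx.symm hPbase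
      -- Pascal identities
      have pas1 : (m-a).choose a = (m-1-a).choose (a-1) + (m-1-a).choose a := by
        have h := Nat.choose_succ_succ (m-1-a) (a-1)
        have e1 : m-1-a+1 = m-a := by omega
        have e2 : a-1+1 = a := by omega
        simp only [Nat.succ_eq_add_one] at h
        rwa [e1, e2] at h
      have pas2 : m.choose a = (m-1).choose (a-1) + (m-1).choose a := by
        have h := Nat.choose_succ_succ (m-1) (a-1)
        have e1 : m-1+1 = m := by omega
        have e2 : a-1+1 = a := by omega
        simp only [Nat.succ_eq_add_one] at h
        rwa [e1, e2] at h
      by_cases hQp : (resP v Q) = ∅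
      · have : (resP v Q).card = 0 := by rw [hQp]; rfl
        omega
      by_cases hPp : (resP v P) = ∅
      · have : (resP v P).card = 0 := by rw [hPp]; rfl
        omega
      · -- both plus parts nonempty
        rcases Nat.lt_or_ge a 2 with ha1 | ha2
        · -- a = 1 : impossible
          exfalso
          obtain ⟨X, hX⟩ := nonempty_iff_ne_empty.2 hPp
          obtain ⟨Y, hY⟩ := nonempty_iff_ne_empty.2 hQp
          have hXcard : X.card = 0 := by
            have := (mem_powersetCard.1 (hPpS hX)).2
            omega
          have hYcard : Y.card = 0 := by
            have := (mem_powersetCard.1 (hQpS hY)).2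
            omega
          obtain ⟨z, hz⟩ := hxp X hX Y hY
          rw [card_eq_zero] at hXcard
          rw [hXcard] at hz
          simp at hz
        · -- a ≥ 2: apply the induction hypothesis to the plus parts
          have s3 : (resP v P).card + (resP v Q).card + (m-1-(a-1)).choose (a-1)
              ≤ (m-1).choose (a-1) + 1 := by
            have := ih (m-1) (by omega) (a-1) (resP v P) (resP v Q) (by omega) (by omega)
              hPpS hQpS hPpsh hQpsh hxp (nonempty_iff_ne_empty.2 hPp)
              (nonempty_iff_ne_empty.2 hQp)
            rwa [hv] at this ⊢
          have e3 : m-1-(a-1) = m-a := by omega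
          rw [e3] at s3
          have pas3 : (m-a).choose (a-1) = (m-a-1).choose (a-2) + (m-a-1).choose (a-1) := by
            have h := Nat.choose_succ_succ (m-a-1) (a-2)
            have e1 : m-a-1+1 = m-a := by omega
            have e2 : a-2+1 = a-1 := by omega
            simp only [Nat.succ_eq_add_one] at h
            rwa [e1, e2] at h
          have e4 : m-1-a = m-a-1 := by omega
          rw [e4] at s1 pas1
          have hpos : 1 ≤ (m-a-1).choose (a-2) := Nat.choose_pos (by omega)
          omega

/-- The cross-intersecting inequality without the shifted hypothesis. -/
theorem CI_main : ∀ N : ℕ, ∀ (m a : ℕ) (P Q : Finset (Finset ℕ)), ms P + ms Q ≤ N →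
    1 ≤ a → 2*a ≤ m →
    P ⊆ powersetCard a (range m) → Q ⊆ powersetCard a (range m) →
    Cross P Q → P.Nonempty → Q.Nonempty →
    P.card + Q.card + (m-a).choose a ≤ m.choose a + 1 := by
  intro N
  induction N using Nat.strong_induction_on with
  | _ N ih =>
    intro m a P Q hN ha ham hPs hQs hx hPne hQne
    by_cases hsh : Shifted P ∧ Shifted Q
    · exact CI_shifted m a P Q ha ham hPs hQs hsh.1 hsh.2 hx hPne hQne
    have step : ∀ i j : ℕ, i < j → (cf i j P ≠ P ∨ cf i j Q ≠ Q) →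
        P.card + Q.card + (m-a).choose a ≤ m.choose a + 1 := by
      intro i j hij hne
      have hlt : ms (cf i j P) + ms (cf i j Q) < ms P + ms Q := by
        rcases hne with h | h
        · have := ms_cf_lt hij h
          have := ms_cf_le (𝒜 := Q) hij
          omega
        · have := ms_cf_lt hij h
          have := ms_cf_le (𝒜 := P) hij
          omega
      have hcP := card_cf i j (by omega) P
      have hcQ := card_cf i j (by omega) Q
      have hres := ih (ms (cf i j P) + ms (cf i j Q)) (by omega) m a _ _ le_rfl ha ham
        (cf_subset_powersetCard hij hPs) (cf_subset_powersetCard hij hQs)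
        (cf_cross hx)
        (card_pos.1 (by rw [hcP]; exact card_pos.2 hPne))
        (card_pos.1 (by rw [hcQ]; exact card_pos.2 hQne))
      rwa [hcP, hcQ] at hres
    rcases not_and_or.1 hsh with hns | hns
    · rw [Shifted] at hns
      push_neg at hns
      obtain ⟨A, hA, i, j, hij, hjA, hiA, hA'⟩ := hns
      apply step i j hij
      left
      intro heq
      have := cp_mem_cf (i := i) (j := j) hA
      rw [heq, cp_of_mem hjA hiA] at this
      exact hA' this
    · rw [Shifted] at hns
      push_neg at hns
      obtain ⟨A, hA, i, j, hij, hjA, hiA, hA'⟩ := hns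
      apply step i j hij
      right
      intro heq
      have := cp_mem_cf (i := i) (j := j) hA
      rw [heq, cp_of_mem hjA hiA] at this
      exact hA' this

lemma image_g_inj {g : ℕ → ℕ} {S : Finset ℕ} (hg : ∀ x ∈ S, ∀ y ∈ S, g x = g y → x = y)
    {A B : Finset ℕ} (hA : A ⊆ S) (hB : B ⊆ S) (h : A.image g = B.image g) : A = B := by
  apply Finset.Subset.antisymm
  · intro x hx
    have : g x ∈ B.image g := by rw [← h]; exact mem_image_of_mem g hx
    obtain ⟨y, hy, hgy⟩ := mem_image.1 this
    rwa [hg y (hB hy) x (hA hx) hgy] at hy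
  · intro x hx
    have : g x ∈ A.image g := by rw [h]; exact mem_image_of_mem g hx
    obtain ⟨y, hy, hgy⟩ := mem_image.1 this
    rwa [hg y (hA hy) x (hB hx) hgy] at hy

/-- The cross-intersecting inequality over an arbitrary finite ground set in `ℕ`. -/
theorem CI_ground (a : ℕ) (S : Finset ℕ) (P Q : Finset (Finset ℕ)) (ha : 1 ≤ a)
    (ham : 2*a ≤ S.card) (hPs : P ⊆ powersetCard a S) (hQs : Q ⊆ powersetCard a S)
    (hx : Cross P Q) (hPne : P.Nonempty) (hQne : Q.Nonempty) :
    P.card + Q.card + (S.card - a).choose a ≤ S.card.choose a + 1 := by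
  classical
  obtain ⟨m, hm⟩ : ∃ m, S.card = m := ⟨S.card, rfl⟩
  have e := S.orderIsoOfFin hm
  set g : ℕ → ℕ := fun x => if h : x ∈ S then ((e.symm ⟨x, h⟩ : Fin m) : ℕ) else 0 with hgdef
  have hg_lt : ∀ x ∈ S, g x < m := by
    intro x hx'
    simp only [hgdef, dif_pos hx']
    exact (e.symm ⟨x, hx'⟩).2
  have hg_inj : ∀ x ∈ S, ∀ y ∈ S, g x = g y → x = y := by
    intro x hx' y hy' h
    simp only [hgdef, dif_pos hx', dif_pos hy'] at h
    have := e.symm.injective (Fin.val_injective h)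
    exact Subtype.ext_iff.1 this
  set Φ : Finset ℕ → Finset ℕ := fun A => A.image g with hΦdef
  have hΦcard : ∀ A : Finset ℕ, A ⊆ S → (Φ A).card = A.card := by
    intro A hAS
    apply card_image_of_injOn
    intro x hx' y hy' h
    exact hg_inj x (hAS hx') y (hAS hy') h
  have hΦmem : ∀ (R : Finset (Finset ℕ)), R ⊆ powersetCard a S →
      R.image Φ ⊆ powersetCard a (range m) := by
    intro R hRs X hX
    obtain ⟨A, hA, rfl⟩ := mem_image.1 hX
    obtain ⟨hAS, hAcard⟩ := mem_powersetCard.1 (hRs hA)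
    rw [mem_powersetCard]
    constructor
    · intro x hx'
      obtain ⟨y, hy, rfl⟩ := mem_image.1 hx'
      rw [mem_range]
      exact hg_lt y (hAS hy)
    · rw [hΦcard A hAS, hAcard]
  have hΦfamcard : ∀ (R : Finset (Finset ℕ)), R ⊆ powersetCard a S →
      (R.image Φ).card = R.card := by
    intro R hRs
    apply card_image_of_injOn
    intro A hA B hB h
    exact image_g_inj hg_inj (mem_powersetCard.1 (hRs hA)).1 (mem_powersetCard.1 (hRs hB)).1 h
  have hxΦ : Cross (P.image Φ) (Q.image Φ) := by
    intro X hX Y hY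
    obtain ⟨A, hA, rfl⟩ := mem_image.1 hX
    obtain ⟨B, hB, rfl⟩ := mem_image.1 hY
    obtain ⟨x, hx'⟩ := hx A hA B hB
    rw [mem_inter] at hx'
    exact ⟨g x, mem_inter.2 ⟨mem_image_of_mem g hx'.1, mem_image_of_mem g hx'.2⟩⟩
  have := CI_main (ms (P.image Φ) + ms (Q.image Φ)) m a (P.image Φ) (Q.image Φ) le_rfl ha
    (hm ▸ ham) (hΦmem P hPs) (hΦmem Q hQs) hxΦ (hPne.image Φ) (hQne.image Φ)
  rw [hΦfamcard P hPs, hΦfamcard Q hQs] at this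
  rw [hm]
  exact this

/-- The pair-cover case of Hilton–Milner: every member meets `{i, j}`. -/
lemma pair_cover {n k i j : ℕ} (hk : 2 ≤ k) (hn : 2*k+1 ≤ n) (hij : i ≠ j)
    {𝒜 : Finset (Finset ℕ)} (hsub : 𝒜 ⊆ powersetCard k (range n)) (hx : Cross 𝒜 𝒜)
    (hnt : ¬ Triv 𝒜) (hcov : ∀ A ∈ 𝒜, i ∈ A ∨ j ∈ A) :
    𝒜.card + (n-k-1).choose (k-1) ≤ (n-1).choose (k-1) + 1 := by
  classical
  have hin : i < n := by
    by_contra hc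
    apply hnt
    refine ⟨j, fun A hA => ?_⟩
    rcases hcov A hA with h | h
    · have := (mem_powersetCard.1 (hsub hA)).1 h
      rw [mem_range] at this
      omega
    · exact h
  have hjn : j < n := by
    by_contra hc
    apply hnt
    refine ⟨i, fun A hA => ?_⟩
    rcases hcov A hA with h | h
    · exact h
    · have := (mem_powersetCard.1 (hsub hA)).1 h
      rw [mem_range] at this
      omega
  set R := 𝒜.filter (fun A => i ∈ A ∧ j ∈ A) with hR
  set P := 𝒜.filter (fun A => i ∈ A ∧ ¬ j ∈ A) with hP
  set Q := 𝒜.filter (fun A => j ∈ A ∧ ¬ i ∈ A) with hQ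
  -- partition of the cardinality
  have hpart : 𝒜.card = R.card + P.card + Q.card := by
    have h1 := card_filter_add_card_filter_not (s := 𝒜) (p := fun A => i ∈ A)
    have h2 := card_filter_add_card_filter_not (s := 𝒜.filter (fun A => i ∈ A))
      (p := fun A => j ∈ A)
    rw [filter_filter, filter_filter] at h2
    have hQeq : 𝒜.filter (fun A => ¬ i ∈ A) = Q := by
      apply Finset.filter_congr
      intro A hA
      constructor
      · intro h
        rcases hcov A hA with h' | h'
        · exact absurd h' h
        · exact ⟨h', h⟩
      · intro h
        exact h.2
    rw [hQeq] at h1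
    rw [← hR, ← hP] at h2
    omega
  -- P and Q are nonempty
  have hPne : P.Nonempty := by
    rw [nonempty_iff_ne_empty]
    intro hc
    apply hnt
    refine ⟨j, fun A hA => ?_⟩
    by_cases hjA : j ∈ A
    · exact hjA
    · rcases hcov A hA with h | h
      · exfalso
        have : A ∈ P := mem_filter.2 ⟨hA, h, hjA⟩
        rw [hc] at this
        exact notMem_empty _ this
      · exact absurd h hjA
  have hQne : Q.Nonempty := by
    rw [nonempty_iff_ne_empty]
    intro hc
    apply hnt
    refine ⟨i, fun A hA => ?_⟩
    by_cases hiA : i ∈ A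
    · exact hiA
    · rcases hcov A hA with h | h
      · exact absurd h hiA
      · exfalso
        have : A ∈ Q := mem_filter.2 ⟨hA, h, hiA⟩
        rw [hc] at this
        exact notMem_empty _ this
  -- the reduced families
  set S : Finset ℕ := ((range n).erase i).erase j with hS
  have hScard : S.card = n - 2 := by
    have hji : j ∈ (range n).erase i := mem_erase.2 ⟨Ne.symm hij, mem_range.2 (by omega)⟩
    rw [hS, card_erase_of_mem hji, card_erase_of_mem (mem_range.2 (by omega)), card_range]
    omega
  set P' := P.image (fun A => A.erase i) with hP'
  set Q' := Q.image (fun A => A.erase j) with hQ'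
  have hP'card : P'.card = P.card := by
    apply card_image_of_injOn
    intro A hA B hB h
    rw [mem_coe, hP, mem_filter] at hA hB
    have h' : A.erase i = B.erase i := h
    rw [← insert_erase hA.2.1, ← insert_erase hB.2.1, h']
  have hQ'card : Q'.card = Q.card := by
    apply card_image_of_injOn
    intro A hA B hB h
    rw [mem_coe, hQ, mem_filter] at hA hB
    have h' : A.erase j = B.erase j := h
    rw [← insert_erase hA.2.1, ← insert_erase hB.2.1, h']
  have hP's : P' ⊆ powersetCard (k-1) S := by
    intro X hX
    obtain ⟨A, hA, rfl⟩ := mem_image.1 hX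
    rw [mem_filter] at hA
    obtain ⟨hAsub, hAcard⟩ := mem_powersetCard.1 (hsub hA.1)
    rw [mem_powersetCard]
    constructor
    · intro x hx'
      rw [mem_erase] at hx'
      rw [hS, mem_erase, mem_erase]
      exact ⟨fun hc => hA.2.2 (hc ▸ hx'.2), hx'.1, hAsub hx'.2⟩
    · rw [card_erase_of_mem hA.2.1, hAcard]
  have hQ's : Q' ⊆ powersetCard (k-1) S := by
    intro X hX
    obtain ⟨A, hA, rfl⟩ := mem_image.1 hX
    rw [mem_filter] at hA
    obtain ⟨hAsub, hAcard⟩ := mem_powersetCard.1 (hsub hA.1)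
    rw [mem_powersetCard]
    constructor
    · intro x hx'
      rw [mem_erase] at hx'
      rw [hS, mem_erase, mem_erase]
      exact ⟨hx'.1, fun hc => hA.2.2 (hc ▸ hx'.2), hAsub hx'.2⟩
    · rw [card_erase_of_mem hA.2.1, hAcard]
  have hx' : Cross P' Q' := by
    intro X hX Y hY
    obtain ⟨A, hA, rfl⟩ := mem_image.1 hX
    obtain ⟨B, hB, rfl⟩ := mem_image.1 hY
    rw [mem_filter] at hA hB
    obtain ⟨x, hxm⟩ := hx A hA.1 B hB.1
    rw [mem_inter] at hxm
    refine ⟨x, mem_inter.2 ⟨mem_erase.2 ⟨?_, hxm.1⟩, mem_erase.2 ⟨?_, hxm.2⟩⟩⟩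
    · exact fun hc => hB.2.2 (hc ▸ hxm.2)
    · exact fun hc => hA.2.2 (hc ▸ hxm.1)
  have hCI := CI_ground (k-1) S P' Q' (by omega) (by rw [hScard]; omega) hP's hQ's hx'
    (hPne.image _) (hQne.image _)
  rw [hP'card, hQ'card, hScard] at hCI
  have e1 : n - 2 - (k-1) = n-k-1 := by omega
  rw [e1] at hCI
  -- bound for R
  have hRbound : R.card ≤ (n-2).choose (k-2) := by
    have hRsub : R ⊆ (powersetCard k (range n)).filter (fun A => i ∈ A ∧ j ∈ A) := by
      intro A hA
      rw [mem_filter] at hA ⊢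
      exact ⟨hsub hA.1, hA.2⟩
    have := card_filter_mem_mem (range n) (by rw [mem_range]; omega : i ∈ range n)
      (by rw [mem_range]; omega : j ∈ range n) hij hk
    rw [card_range] at this
    calc R.card ≤ _ := card_le_card hRsub
      _ = (n-2).choose (k-2) := this
  -- Pascal
  have pas : (n-1).choose (k-1) = (n-2).choose (k-2) + (n-2).choose (k-1) := by
    have h := Nat.choose_succ_succ (n-2) (k-2)
    have e2 : n-2+1 = n-1 := by omega
    have e3 : k-2+1 = k-1 := by omega
    simp only [Nat.succ_eq_add_one] at h
    rwa [e2, e3] at h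
  omega

lemma pascal (x y : ℕ) (hx : 1 ≤ x) (hy : 1 ≤ y) :
    x.choose y = (x-1).choose (y-1) + (x-1).choose y := by
  have h := Nat.choose_succ_succ (x-1) (y-1)
  simp only [Nat.succ_eq_add_one] at h
  rwa [show x-1+1 = x by omega, show y-1+1 = y by omega] at h

/-- Hilton–Milner for shifted families. -/
theorem HM_shifted : ∀ n : ℕ, ∀ (k : ℕ) (𝒜 : Finset (Finset ℕ)), 1 ≤ k → 2*k+1 ≤ n →
    𝒜 ⊆ powersetCard k (range n) → Shifted 𝒜 → Cross 𝒜 𝒜 → ¬ Triv 𝒜 →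
    𝒜.card + (n-k-1).choose (k-1) ≤ (n-1).choose (k-1) + 1 := by
  intro n
  induction n using Nat.strong_induction_on with
  | _ n ih =>
    intro k 𝒜 hk hn hsub hsh hx hnt
    rcases Nat.lt_or_ge k 2 with hk1 | hk2
    · exact absurd hnt (absurd (k_one (fun A hA => by
        have := (mem_powersetCard.1 (hsub hA)).2; omega) hx hnt) not_false)
    rcases Nat.lt_or_ge k 3 with hk2' | hk3
    · -- k = 2 : triangle
      have h3 := triangle (fun A hA => by
        have := (mem_powersetCard.1 (hsub hA)).2; omega) hx hnt
      rw [show n-k-1 = n-3 by omega, show k-1 = 1 by omega, Nat.choose_one_right,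
        Nat.choose_one_right]
      omega
    -- main case: k ≥ 3
    have hm0 : 0 < n := by omega
    have hB0 : Finset.Ico 1 (k+1) ∈ 𝒜 := by
      have hw : ∃ A ∈ 𝒜, 0 ∉ A := by
        by_contra hc; push_neg at hc; exact hnt ⟨0, hc⟩
      obtain ⟨A, hA, h0A⟩ := hw
      exact shifted_Ico_mem hsh (∑ x ∈ A, x) A le_rfl hA h0A (mem_powersetCard.1 (hsub hA)).2
    have hB0card : (Finset.Ico 1 (k+1)).card = k := by rw [Nat.card_Ico]; omega
    have h0B0 : (0:ℕ) ∉ Finset.Ico 1 (k+1) := by simp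
    have hvB0 : n-1 ∉ Finset.Ico 1 (k+1) := by rw [Finset.mem_Ico]; omega
    have hAmS := resM_subset rfl hm0 hsub
    have hApS := resP_subset rfl hm0 (by omega) hsub
    have hAmsh := resM_shifted rfl hsub hsh
    have hApsh := resP_shifted rfl hsub hsh
    have hxm : Cross (resM (n-1) 𝒜) (resM (n-1) 𝒜) := hx.mono (filter_subset _ _) (filter_subset _ _)
    have hxp : Cross (resP (n-1) 𝒜) (resP (n-1) 𝒜) := resP_cross rfl (by omega) (by omega) hsub hsub hx hsh
    have hcard := card_resM_add_resP (n-1) 𝒜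
    have hB0m : Finset.Ico 1 (k+1) ∈ resM (n-1) 𝒜 := mem_filter.2 ⟨hB0, hvB0⟩
    have hntm : ¬ Triv (resM (n-1) 𝒜) := by
      rintro ⟨y, hy⟩
      exact h0B0 (shifted_common_zero hAmsh hy _ hB0m)
    -- bound for the minus part
    have s1 : (resM (n-1) 𝒜).card + (n-1-k-1).choose (k-1) ≤ (n-1-1).choose (k-1) + 1 := by
      rcases eq_or_lt_of_le hn with heq | hlt
      · have hp := crosspair (k := k) (range (n-1)) (by rw [card_range]; omega) hAmS hAmS hxm
        have hdb := choose_two_mul k (by omega)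
        rw [show n-1-k-1 = k-1 by omega, show n-1-1 = 2*k-1 by omega, Nat.choose_self]
        omega
      · exact ih (n-1) (by omega) k (resM (n-1) 𝒜) hk (by omega) hAmS hAmsh hxm hntm
    rw [show n-1-k-1 = n-k-2 by omega, show n-1-1 = n-2 by omega] at s1
    have pas1 := pascal (n-k-1) (k-1) (by omega) (by omega)
    rw [show n-k-1-1 = n-k-2 by omega, show k-1-1 = k-2 by omega] at pas1
    have pas2 := pascal (n-1) (k-1) (by omega) (by omega)
    rw [show n-1-1 = n-2 by omega, show k-1-1 = k-2 by omega] at pas2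
    by_cases htp : Triv (resP (n-1) 𝒜)
    · -- the trace family is a star at 0; count it directly
      obtain ⟨y, hy⟩ := htp
      have h0p : ∀ P ∈ resP (n-1) 𝒜, 0 ∈ P := shifted_common_zero hApsh hy
      have hmeet : ∀ P ∈ resP (n-1) 𝒜, ¬ Disjoint P (Finset.Ico 1 (k+1)) := by
        intro P hP
        rw [resP, mem_image] at hP
        obtain ⟨A, hA, rfl⟩ := hP
        rw [mem_filter] at hA
        obtain ⟨x, hxm'⟩ := hx A hA.1 _ hB0
        rw [mem_inter] at hxm'
        rw [not_disjoint_iff_nonempty_inter]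
        exact ⟨x, mem_inter.2 ⟨mem_erase.2 ⟨fun hc => hvB0 (hc ▸ hxm'.2), hxm'.1⟩, hxm'.2⟩⟩
      have hsubf : resP (n-1) 𝒜 ⊆ (powersetCard (k-1) (range (n-1))).filter
          (fun P => 0 ∈ P ∧ ¬ Disjoint P (Finset.Ico 1 (k+1))) := by
        intro P hP
        exact mem_filter.2 ⟨hApS hP, h0p P hP, hmeet P hP⟩
      have hcount := count_star_meet (range (n-1)) (Finset.Ico 1 (k+1))
        (by intro x hx'; rw [Finset.mem_Ico] at hx'; rw [mem_range]; omega)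
        (mem_range.2 (by omega)) h0B0 (show 0 < k-1 by omega)
      rw [card_range, hB0card] at hcount
      rw [show n-1-k-1 = n-k-2 by omega, show n-1-1 = n-2 by omega,
        show k-1-1 = k-2 by omega] at hcount
      have s2 := card_le_card hsubf
      omega
    · -- the trace family is nontrivial: induction hypothesis at (n-1, k-1)
      have s3 := ih (n-1) (by omega) (k-1) (resP (n-1) 𝒜) (by omega) (by omega) hApS hApsh hxp htp
      rw [show n-1-(k-1)-1 = n-k-1 by omega, show n-1-1 = n-2 by omega,
        show k-1-1 = k-2 by omega] at s3
      have pas3 := pascal (n-k-1) (k-2) (by omega) (by omega)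
      rw [show n-k-1-1 = n-k-2 by omega, show k-2-1 = k-3 by omega] at pas3
      have hpos : 1 ≤ (n-k-2).choose (k-3) := Nat.choose_pos (by omega)
      omega

/-- The Hilton–Milner theorem (sum form, over `ℕ` ground sets). -/
theorem HM_main : ∀ N : ℕ, ∀ (n k : ℕ) (𝒜 : Finset (Finset ℕ)), ms 𝒜 ≤ N → 1 ≤ k →
    2*k+1 ≤ n → 𝒜 ⊆ powersetCard k (range n) → Cross 𝒜 𝒜 → ¬ Triv 𝒜 →
    𝒜.card + (n-k-1).choose (k-1) ≤ (n-1).choose (k-1) + 1 := by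
  intro N
  induction N using Nat.strong_induction_on with
  | _ N ih =>
    intro n k 𝒜 hN hk hn hsub hx hnt
    rcases Nat.lt_or_ge k 2 with hk1 | hk2
    · exfalso
      exact k_one (fun A hA => by
        have := (mem_powersetCard.1 (hsub hA)).2; omega) hx hnt
    by_cases hsh : Shifted 𝒜
    · exact HM_shifted n k 𝒜 hk hn hsub hsh hx hnt
    · rw [Shifted] at hsh
      push_neg at hsh
      obtain ⟨A, hA, i, j, hij, hjA, hiA, hA'⟩ := hsh
      have hne : cf i j 𝒜 ≠ 𝒜 := by
        intro heq
        have := cp_mem_cf (i := i) (j := j) hA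
        rw [heq, cp_of_mem hjA hiA] at this
        exact hA' this
      have hlt := ms_cf_lt hij hne
      have hcc := card_cf i j (by omega) 𝒜
      by_cases htr : Triv (cf i j 𝒜)
      · exact pair_cover hk2 hn (by omega) hsub hx hnt (cover_of_triv_cf hnt htr)
      · have hres := ih (ms (cf i j 𝒜)) (by omega) n k (cf i j 𝒜) le_rfl hk hn
          (cf_subset_powersetCard hij hsub) (cf_cross hx) htr
        rwa [hcc] at hres

end HMaux

/-- The Kneser graph `KG(n,k)`: vertices are the `k`-subsets of an `n`-set,
two of them being adjacent iff they are disjoint. -/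
def kneser (n k : ℕ) : SimpleGraph {A : Finset (Fin n) // A.card = k} where
  Adj A B := Disjoint A.1 B.1 ∧ A ≠ B
  symm := ⟨by rintro A B ⟨h, hne⟩; exact ⟨h.symm, hne.symm⟩⟩
  loopless := ⟨by rintro A ⟨-, hne⟩; exact hne rfl⟩

/-- A free independent set: an independent set contained in at least two
distinct maximal independent sets. -/
def FreeIndep {V : Type*} (G : SimpleGraph V) (F : Set V) : Prop :=
  IsIndep G F ∧ ∃ M₁ M₂ : Set V, M₁ ≠ M₂ ∧ F ⊆ M₁ ∧ F ⊆ M₂ ∧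
    Maximal (IsIndep G) M₁ ∧ Maximal (IsIndep G) M₂

theorem freeIndep_card_le (n k : ℕ) (hk : 0 < k) (hn : 2 * k < n)
    (F : Finset {A : Finset (Fin n) // A.card = k})
    (hF : FreeIndep (kneser n k) (F : Set {A : Finset (Fin n) // A.card = k})) :
    F.card ≤ (n - 1).choose (k - 1) - (n - k - 1).choose (k - 1) := by
  classical
  obtain ⟨hind, M₁, M₂, hMne, hFM₁, hFM₂, hmax₁, hmax₂⟩ := hF
  -- pick B ∈ M₁ \ M₂
  have hM12 : ¬ M₁ ⊆ M₂ := by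
    intro hsub12
    exact hMne (le_antisymm hsub12 (hmax₁.2 hmax₂.1 hsub12))
  obtain ⟨B, hBM₁, hBM₂⟩ := Set.not_subset.1 hM12
  -- pick C ∈ M₂ adjacent to B
  have hnotind : ¬ IsIndep (kneser n k) (insert B M₂) := by
    intro hind'
    exact hBM₂ (hmax₂.2 hind' (Set.subset_insert B M₂) (Set.mem_insert B M₂))
  rw [IsIndep] at hnotind
  push_neg at hnotind
  obtain ⟨u, hu, w, hw, hadj⟩ := hnotind
  obtain ⟨C, hCM₂, hadjBC⟩ : ∃ C ∈ M₂, (kneser n k).Adj B C := by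
    rcases Set.mem_insert_iff.1 hu with rfl | hu'
    · rcases Set.mem_insert_iff.1 hw with rfl | hw'
      · exact absurd hadj ((kneser n k).loopless.irrefl _)
      · exact ⟨w, hw', hadj⟩
    · rcases Set.mem_insert_iff.1 hw with rfl | hw'
      · exact ⟨u, hu', hadj.symm⟩
      · exact absurd hadj (hmax₂.1 hu' hw')
  obtain ⟨hdisjBC, hneBC⟩ := hadjBC
  have hBF : B ∉ F := fun h => hBM₂ (hFM₂ (Finset.mem_coe.2 h))
  have hCF : C ∉ F := by
    intro h
    exact (hmax₁.1 (hFM₁ (Finset.mem_coe.2 h)) hBM₁) ⟨hdisjBC.symm, fun hc => hneBC hc.symm⟩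
  -- members of F meet both B and C
  have hmeetB : ∀ A ∈ F, ((A : {A : Finset (Fin n) // A.card = k}).1 ∩ B.1).Nonempty := by
    intro A hA
    have hnadj := hmax₁.1 (hFM₁ (Finset.mem_coe.2 hA)) hBM₁
    have hAB : A ≠ B := fun hc => hBF (hc ▸ hA)
    rw [← Finset.not_disjoint_iff_nonempty_inter]
    exact fun hd => hnadj ⟨hd, hAB⟩
  have hmeetC : ∀ A ∈ F, ((A : {A : Finset (Fin n) // A.card = k}).1 ∩ C.1).Nonempty := by
    intro A hA
    have hnadj := hmax₂.1 (hFM₂ (Finset.mem_coe.2 hA)) hCM₂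
    have hAC : A ≠ C := fun hc => hCF (hc ▸ hA)
    rw [← Finset.not_disjoint_iff_nonempty_inter]
    exact fun hd => hnadj ⟨hd, hAC⟩
  have hFint : ∀ A ∈ F, ∀ A' ∈ F,
      ((A : {A : Finset (Fin n) // A.card = k}).1 ∩ A'.1).Nonempty := by
    intro A hA A' hA'
    by_cases heq : A = A'
    · subst heq
      rw [Finset.inter_self, ← Finset.card_pos, A.2]
      exact hk
    · have hnadj := hind (Finset.mem_coe.2 hA) (Finset.mem_coe.2 hA')
      rw [← Finset.not_disjoint_iff_nonempty_inter]
      exact fun hd => hnadj ⟨hd, heq⟩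
  -- transfer to families of subsets of ℕ
  set ι : Finset (Fin n) → Finset ℕ := fun X => X.image Fin.val with hι
  have hιinj : Function.Injective ι := Finset.image_injective Fin.val_injective
  have hιcard : ∀ X : Finset (Fin n), (ι X).card = X.card := fun X =>
    Finset.card_image_of_injective X Fin.val_injective
  have hιsub : ∀ X : Finset (Fin n), ι X ⊆ Finset.range n := by
    intro X x hx
    obtain ⟨y, _, rfl⟩ := Finset.mem_image.1 hx
    exact Finset.mem_range.2 y.2
  have hιmeet : ∀ X Y : Finset (Fin n), (X ∩ Y).Nonempty → (ι X ∩ ι Y).Nonempty := by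
    intro X Y ⟨x, hx⟩
    rw [Finset.mem_inter] at hx
    exact ⟨x.1, Finset.mem_inter.2 ⟨Finset.mem_image_of_mem _ hx.1,
      Finset.mem_image_of_mem _ hx.2⟩⟩
  set 𝔉 : Finset (Finset ℕ) := F.image (fun A => ι A.1) with h𝔉
  have h𝔉card : 𝔉.card = F.card := by
    apply Finset.card_image_of_injOn
    intro A _ A' _ h
    exact Subtype.ext (hιinj h)
  have h𝔉mem : ∀ X ∈ 𝔉, X ∈ Finset.powersetCard k (Finset.range n) := by
    intro X hX
    obtain ⟨A, _, rfl⟩ := Finset.mem_image.1 hX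
    exact Finset.mem_powersetCard.2 ⟨hιsub _, by rw [hιcard, A.2]⟩
  have hB𝔉 : ι B.1 ∉ 𝔉 := by
    intro hc
    obtain ⟨A, hA, hAe⟩ := Finset.mem_image.1 hc
    exact hBF ((Subtype.ext (hιinj hAe) : A = B) ▸ hA)
  by_cases htriv : HMaux.Triv (insert (ι B.1) 𝔉)
  · -- the common element lies in B, hence outside C: count directly
    obtain ⟨y, hy⟩ := htriv
    have hyB : y ∈ ι B.1 := hy _ (Finset.mem_insert_self _ _)
    have hyn : y < n := Finset.mem_range.1 (hιsub B.1 hyB)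
    have hyC : y ∉ ι C.1 := by
      intro hc
      obtain ⟨b, hb, hbe⟩ := Finset.mem_image.1 hyB
      obtain ⟨c, hc', hce⟩ := Finset.mem_image.1 hc
      have : b = c := Fin.val_injective (by rw [hbe, hce])
      exact (Finset.disjoint_left.1 hdisjBC) hb (this ▸ hc')
    have hsubf : 𝔉 ⊆ (Finset.powersetCard k (Finset.range n)).filter
        (fun X => y ∈ X ∧ ¬ Disjoint X (ι C.1)) := by
      intro X hX
      refine Finset.mem_filter.2 ⟨h𝔉mem X hX, hy _ (Finset.mem_insert_of_mem hX), ?_⟩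
      obtain ⟨A, hA, rfl⟩ := Finset.mem_image.1 hX
      rw [Finset.not_disjoint_iff_nonempty_inter]
      exact hιmeet _ _ (hmeetC A hA)
    have hcount := HMaux.count_star_meet (Finset.range n) (ι C.1) (hιsub C.1)
      (Finset.mem_range.2 hyn) hyC hk
    rw [Finset.card_range] at hcount
    have hCcard : (ι C.1).card = k := by rw [hιcard, C.2]
    rw [hCcard] at hcount
    have hle := Finset.card_le_card hsubf
    have : F.card + (n - k - 1).choose (k-1) ≤ (n-1).choose (k-1) := by omega
    omega
  · -- nontrivial: apply Hilton–Milner to `insert (ι B.1) 𝔉`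
    set T : Finset (Finset ℕ) := insert (ι B.1) 𝔉 with hT
    have hTsub : T ⊆ Finset.powersetCard k (Finset.range n) := by
      intro X hX
      rcases Finset.mem_insert.1 hX with rfl | hX'
      · exact Finset.mem_powersetCard.2 ⟨hιsub _, by rw [hιcard, B.2]⟩
      · exact h𝔉mem X hX'
    have hTx : HMaux.Cross T T := by
      intro X hX Y hY
      rcases Finset.mem_insert.1 hX with rfl | hX'
      · rcases Finset.mem_insert.1 hY with rfl | hY'
        · rw [Finset.inter_self, ← Finset.card_pos, hιcard, B.2]
          exact hk
        · obtain ⟨A, hA, rfl⟩ := Finset.mem_image.1 hY'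
          rw [Finset.inter_comm]
          exact hιmeet _ _ (hmeetB A hA)
      · obtain ⟨A, hA, rfl⟩ := Finset.mem_image.1 hX'
        rcases Finset.mem_insert.1 hY with rfl | hY'
        · exact hιmeet _ _ (hmeetB A hA)
        · obtain ⟨A', hA', rfl⟩ := Finset.mem_image.1 hY'
          exact hιmeet _ _ (hFint A hA A' hA')
    have hTcard : T.card = F.card + 1 := by
      rw [hT, Finset.card_insert_of_notMem hB𝔉, h𝔉card]
    have hHM := HMaux.HM_main (HMaux.ms T) n k T le_rfl hk (by omega) hTsub hTx htriv
    rw [hTcard] at hHM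
    omega
end

section
/- For n > 2k ≥ 4, we have C(n-1, k-1) - C(n-k-1, k-1) ≤ k·C(n-2, k-2). -/
lemma choose_diff_aux (m s : ℕ) : ∀ t, (m + t + 1).choose (s + 1) ≤
    m.choose (s + 1) + (t + 1) * (m + t).choose s := by
  intro t
  induction t with
  | zero =>
    simp [Nat.choose_succ_succ, Nat.succ_eq_add_one, Nat.add_comm]
  | succ t ih =>
    have pas : (m + t + 2).choose (s + 1)
        = (m + t + 1).choose s + (m + t + 1).choose (s + 1) :=
      Nat.choose_succ_succ (m + t + 1) s
    have mono : (m + t).choose s ≤ (m + t + 1).choose s :=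
      Nat.choose_le_choose s (Nat.le_succ _)
    calc (m + (t + 1) + 1).choose (s + 1)
        = (m + t + 1).choose s + (m + t + 1).choose (s + 1) := by
          rw [show m + (t + 1) + 1 = m + t + 2 by ring, pas]
      _ ≤ (m + t + 1).choose s + (m.choose (s + 1) + (t + 1) * (m + t).choose s) := by
          exact Nat.add_le_add_left ih _
      _ ≤ m.choose (s + 1) + (t + 1 + 1) * (m + (t + 1)).choose s := by
          have : (t + 1) * (m + t).choose s ≤ (t + 1) * (m + t + 1).choose s :=
            Nat.mul_le_mul_left _ mono
          have h2 : m + (t + 1) = m + t + 1 := by ring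
          rw [h2]
          nlinarith [this, mono]

theorem choose_diff_le (n k : ℕ) (hk : 2 ≤ k) (hn : 2 * k < n) :
    (n - 1).choose (k - 1) - (n - k - 1).choose (k - 1) ≤ k * (n - 2).choose (k - 2) := by
  have h := choose_diff_aux (n - k - 1) (k - 2) (k - 1)
  have e1 : n - k - 1 + (k - 1) = n - 2 := by omega
  have e2 : n - k - 1 + (k - 1) + 1 = n - 1 := by omega
  have e3 : k - 2 + 1 = k - 1 := by omega
  have e4 : k - 1 + 1 = k := by omega
  have e5 : n - 2 + 1 = n - 1 := by omega
  rw [e1, e3, e4, e5] at h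
  omega
end
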